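/- arXiv:1003.3319 — 8 statements merged into one kernel-verified Lean document; each statement's English description precedes it below -/
import Mathlib

section
/- Growth estimate for perturbed diagonal systems: let (λ_n) be a sequence of nonzero complex numbers and (R_n) a sequence of 2×2 complex matrices with S := Σ_{k=1}^∞ ‖R_k‖/|λ_k| < ∞. Suppose there exists M > 0 such that ∏_{l=n+1}^{m} |λ_l| ≥ 1/M for all m ≥ n ≥ 0. Then every solution (x_n) of x_{n+1} = (diag(λ_n, 1/λ_n) + R_n)·x_n, n ≥ 1, satisfies ‖x_n‖ ≤ (∏_{l=1}^{n-1} |λ_l|)·exp((1+M²)·S)·(1+M²)·‖x_1‖ for all n ≥ 1. -/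
open Matrix Finset

/-- Product expansion: ∏ (1+t_k) = 1 + ∑ t_k ∏_{j<k} (1+t_j). -/
private lemma prod_one_add_eq (t : ℕ → ℝ) :
    ∀ n : ℕ, ∏ k ∈ Icc 1 n, (1 + t k)
      = 1 + ∑ k ∈ Icc 1 n, t k * ∏ j ∈ Icc 1 (k - 1), (1 + t j) := by
  intro n
  induction n with
  | zero => simp
  | succ n ih =>
    rw [Finset.prod_Icc_succ_top (Nat.le_add_left 1 n),
      Finset.sum_Icc_succ_top (Nat.le_add_left 1 n)]
    simp only [Nat.add_sub_cancel]
    rw [ih]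
    ring

/-- Variation of constants for a scalar linear recurrence. -/
private lemma lin_rec (z w μ : ℕ → ℂ) (h : ∀ n, 1 ≤ n → z (n + 1) = μ n * z n + w n) :
    ∀ n : ℕ, z (n + 1) = (∏ i ∈ Icc 1 n, μ i) * z 1
      + ∑ k ∈ Icc 1 n, (∏ i ∈ Icc (k + 1) n, μ i) * w k := by
  intro n
  induction n with
  | zero => simp
  | succ n ih =>
    rw [h (n + 1) (Nat.le_add_left 1 n), ih,
      Finset.prod_Icc_succ_top (Nat.le_add_left 1 n),
      Finset.sum_Icc_succ_top (Nat.le_add_left 1 n)]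
    have e1 : ∀ k ∈ Icc 1 n, (∏ i ∈ Icc (k + 1) (n + 1), μ i) * w k
        = μ (n + 1) * ((∏ i ∈ Icc (k + 1) n, μ i) * w k) := by
      intro k hk
      simp only [Finset.mem_Icc] at hk
      rw [Finset.prod_Icc_succ_top (by omega)]
      ring
    rw [Finset.sum_congr rfl e1, ← Finset.mul_sum]
    have e2 : Icc (n + 1 + 1) (n + 1) = (∅ : Finset ℕ) := Finset.Icc_eq_empty (by omega)
    rw [e2]
    simp only [Finset.prod_empty, one_mul]
    ring

theorem growth_estimate_perturbed_diagonal
    (l : ℕ → ℂ) (hl : ∀ n, l n ≠ 0)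
    (R : ℕ → EuclideanSpace ℂ (Fin 2) →L[ℂ] EuclideanSpace ℂ (Fin 2))
    (hS : Summable fun k : ℕ => ‖R (k + 1)‖ / ‖l (k + 1)‖)
    (M : ℝ) (hM : 0 < M)
    (hprod : ∀ m n : ℕ, n ≤ m → (1 : ℝ) / M ≤ ∏ i ∈ Finset.Icc (n + 1) m, ‖l i‖)
    (x : ℕ → EuclideanSpace ℂ (Fin 2))
    (hx : ∀ n, 1 ≤ n →
      x (n + 1) =
        (Matrix.toEuclideanCLM (𝕜 := ℂ) (Matrix.diagonal ![l n, (l n)⁻¹]) + R n) (x n)) :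
    ∀ n, 1 ≤ n →
      ‖x n‖ ≤ (∏ i ∈ Finset.Icc 1 (n - 1), ‖l i‖) *
        Real.exp ((1 + M ^ 2) * ∑' k : ℕ, ‖R (k + 1)‖ / ‖l (k + 1)‖) *
        (1 + M ^ 2) * ‖x 1‖ := by
  -- notation
  set K : ℝ := 1 + M ^ 2 with hK
  set c : ℕ → ℝ := fun k => ‖R k‖ / ‖l k‖ with hc
  have hlpos : ∀ i, (0:ℝ) < ‖l i‖ := fun i => norm_pos_iff.mpr (hl i)
  have hc0 : ∀ k, 0 ≤ c k := fun k => div_nonneg (norm_nonneg _) (norm_nonneg _)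
  have hK1 : (1:ℝ) ≤ K := by nlinarith [sq_nonneg M]
  have hK0 : (0:ℝ) ≤ K := le_trans zero_le_one hK1
  have hQpos : ∀ a b : ℕ, (0:ℝ) < ∏ i ∈ Icc a b, ‖l i‖ :=
    fun a b => Finset.prod_pos fun i _ => hlpos i
  -- inverse-product bound
  have hinv : ∀ k n : ℕ, k ≤ n →
      (∏ i ∈ Icc (k + 1) n, ‖l i‖)⁻¹ ≤ M ^ 2 * ∏ i ∈ Icc (k + 1) n, ‖l i‖ := by
    intro k n hkn
    have h1 := hprod n k hkn
    have hp := hQpos (k + 1) n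
    have h1' : 1 ≤ (∏ i ∈ Icc (k + 1) n, ‖l i‖) * M := (div_le_iff₀ hM).mp h1
    rw [inv_le_iff_one_le_mul₀ hp]
    nlinarith [sq_nonneg M, mul_pos hp hp]
  -- coordinate norm bound
  have hcoord : ∀ (v : EuclideanSpace ℂ (Fin 2)) (i : Fin 2), ‖v i‖ ≤ ‖v‖ := by
    intro v i
    have h1 : ‖v i‖ = Real.sqrt (‖v i‖ ^ 2) := (Real.sqrt_sq (norm_nonneg _)).symm
    rw [h1, EuclideanSpace.norm_eq]
    apply Real.sqrt_le_sqrt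
    rw [Fin.sum_univ_two]
    fin_cases i <;> simp <;> positivity
  -- componentwise recurrence
  have hcomp : ∀ n : ℕ, 1 ≤ n → ∀ i : Fin 2,
      x (n + 1) i = (![l n, (l n)⁻¹]) i * x n i + (R n (x n)) i := by
    intro n hn i
    rw [hx n hn]
    have h2 : (Matrix.toEuclideanCLM (𝕜 := ℂ) (Matrix.diagonal ![l n, (l n)⁻¹])) (x n) i
        = (![l n, (l n)⁻¹]) i * x n i := by
      have h3 : (Matrix.toEuclideanCLM (𝕜 := ℂ) (Matrix.diagonal ![l n, (l n)⁻¹])) (x n) i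
          = ((Matrix.diagonal ![l n, (l n)⁻¹]) *ᵥ (WithLp.equiv _ _ (x n))) i := rfl
      rw [h3, Matrix.mulVec_diagonal]; rfl
    rw [ContinuousLinearMap.add_apply]
    simp only [PiLp.add_apply]
    rw [h2]
  -- variation of constants for each component
  have ha := lin_rec (fun n => x n 0) (fun n => (R n (x n)) 0) l
    (fun n hn => by simpa using hcomp n hn 0)
  have hb := lin_rec (fun n => x n 1) (fun n => (R n (x n)) 1) (fun i => (l i)⁻¹)
    (fun n hn => by simpa using hcomp n hn 1)
  -- the combined bound
  set C : ℕ → ℝ := fun n => (∏ i ∈ Icc 1 n, ‖l i‖) * ‖x 1‖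
      + ∑ k ∈ Icc 1 n, (∏ i ∈ Icc (k + 1) n, ‖l i‖) * (‖R k‖ * ‖x k‖) with hCdef
  have hC0 : ∀ n, 0 ≤ C n := by
    intro n
    apply add_nonneg
    · exact mul_nonneg (le_of_lt (hQpos 1 n)) (norm_nonneg _)
    · exact Finset.sum_nonneg fun k _ => mul_nonneg (le_of_lt (hQpos (k+1) n))
        (mul_nonneg (norm_nonneg _) (norm_nonneg _))
  have hterm : ∀ k : ℕ, ‖(R k) (x k) (0 : Fin 2)‖ ≤ ‖R k‖ * ‖x k‖ := fun k =>
    le_trans (hcoord _ 0) ((R k).le_opNorm (x k))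
  have hterm1 : ∀ k : ℕ, ‖(R k) (x k) (1 : Fin 2)‖ ≤ ‖R k‖ * ‖x k‖ := fun k =>
    le_trans (hcoord _ 1) ((R k).le_opNorm (x k))
  have ha' : ∀ n : ℕ, ‖x (n + 1) 0‖ ≤ C n := by
    intro n
    rw [show x (n + 1) 0 = _ from ha n]
    refine (norm_add_le _ _).trans (add_le_add ?_ ?_)
    · rw [norm_mul, norm_prod]
      exact mul_le_mul_of_nonneg_left (hcoord (x 1) 0) (le_of_lt (hQpos 1 n))
    · refine (norm_sum_le _ _).trans (Finset.sum_le_sum fun k _ => ?_)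
      rw [norm_mul, norm_prod]
      exact mul_le_mul_of_nonneg_left (hterm k) (le_of_lt (hQpos (k+1) n))
  have hb' : ∀ n : ℕ, ‖x (n + 1) 1‖ ≤ M ^ 2 * C n := by
    intro n
    rw [show x (n + 1) 1 = _ from hb n]
    have hprodinv : ∀ a b : ℕ, ‖∏ i ∈ Icc a b, (l i)⁻¹‖ = (∏ i ∈ Icc a b, ‖l i‖)⁻¹ := by
      intro a b
      rw [norm_prod, ← Finset.prod_inv_distrib]
      exact Finset.prod_congr rfl fun i _ => norm_inv (l i)
    rw [hCdef, mul_add, Finset.mul_sum]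
    refine (norm_add_le _ _).trans (add_le_add ?_ ?_)
    · rw [norm_mul, hprodinv]
      calc (∏ i ∈ Icc 1 n, ‖l i‖)⁻¹ * ‖x 1 1‖
          ≤ (M ^ 2 * ∏ i ∈ Icc 1 n, ‖l i‖) * ‖x 1‖ := by
            have := hinv 0 n (Nat.zero_le n)
            simp only [Nat.zero_add] at this
            exact mul_le_mul this (hcoord (x 1) 1) (norm_nonneg _)
              (by positivity)
        _ = M ^ 2 * ((∏ i ∈ Icc 1 n, ‖l i‖) * ‖x 1‖) := by ring
    · refine (norm_sum_le _ _).trans (Finset.sum_le_sum fun k hk => ?_)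
      simp only [Finset.mem_Icc] at hk
      rw [norm_mul, hprodinv]
      calc (∏ i ∈ Icc (k + 1) n, ‖l i‖)⁻¹ * ‖(R k) (x k) 1‖
          ≤ (M ^ 2 * ∏ i ∈ Icc (k + 1) n, ‖l i‖) * (‖R k‖ * ‖x k‖) :=
            mul_le_mul (hinv k n hk.2) (hterm1 k) (norm_nonneg _) (by positivity)
        _ = M ^ 2 * ((∏ i ∈ Icc (k + 1) n, ‖l i‖) * (‖R k‖ * ‖x k‖)) := by ring
  have hkey : ∀ n : ℕ, ‖x (n + 1)‖ ≤ K * C n := by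
    intro n
    have h0 := ha' n; have h1 := hb' n
    rw [EuclideanSpace.norm_eq]
    have hs : Real.sqrt (∑ i : Fin 2, ‖x (n + 1) i‖ ^ 2) ≤ Real.sqrt ((K * C n) ^ 2) := by
      apply Real.sqrt_le_sqrt
      rw [Fin.sum_univ_two, hK]
      have hC := hC0 n
      nlinarith [norm_nonneg (x (n + 1) 0), norm_nonneg (x (n + 1) 1), sq_nonneg M,
        sq_nonneg (M ^ 2 * C n), mul_nonneg (sq_nonneg M) hC]
    rwa [Real.sqrt_sq (mul_nonneg hK0 (hC0 n))] at hs
  -- discrete Gronwall by strong induction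
  have hIcc : ∀ m : ℕ, Icc 1 m = Ioc 0 m := by
    intro m; ext a; simp only [Finset.mem_Icc, Finset.mem_Ioc]; omega
  have main : ∀ n : ℕ, ‖x (n + 1)‖ ≤ (∏ i ∈ Icc 1 n, ‖l i‖) *
      (K * ‖x 1‖ * ∏ k ∈ Icc 1 n, (1 + K * c k)) := by
    intro n
    induction n using Nat.strong_induction_on with
    | _ n ih =>
      refine (hkey n).trans ?_
      have hsum : ∀ k ∈ Icc 1 n, (∏ i ∈ Icc (k + 1) n, ‖l i‖) * (‖R k‖ * ‖x k‖)
          ≤ (∏ i ∈ Icc 1 n, ‖l i‖) *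
            (K * c k * (‖x 1‖ * ∏ j ∈ Icc 1 (k - 1), (1 + K * c j))) := by
        intro k hk
        simp only [Finset.mem_Icc] at hk
        obtain ⟨j, rfl⟩ : ∃ j, k = j + 1 := ⟨k - 1, by omega⟩
        simp only [Nat.add_sub_cancel]
        have hxk := ih j (by omega)
        have hsplit : (∏ i ∈ Icc 1 n, ‖l i‖)
            = (∏ i ∈ Icc 1 j, ‖l i‖) * ‖l (j + 1)‖ * ∏ i ∈ Icc (j + 1 + 1) n, ‖l i‖ := by
          have hIcc2 : Icc (j + 1 + 1) n = Ioc (j + 1) n := by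
            ext a; simp only [Finset.mem_Icc, Finset.mem_Ioc]; omega
          rw [hIcc n, hIcc j, hIcc2]
          rw [← Finset.prod_Ioc_consecutive (fun i => ‖l i‖) (Nat.zero_le (j + 1)) (by omega : j + 1 ≤ n)]
          rw [Finset.prod_Ioc_succ_top (Nat.zero_le j)]
        have heq : (∏ i ∈ Icc 1 n, ‖l i‖) *
              (K * c (j + 1) * (‖x 1‖ * ∏ m ∈ Icc 1 j, (1 + K * c m)))
            = (∏ i ∈ Icc (j + 1 + 1) n, ‖l i‖) *
              (‖R (j + 1)‖ * ((∏ i ∈ Icc 1 j, ‖l i‖) *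
                (K * ‖x 1‖ * ∏ m ∈ Icc 1 j, (1 + K * c m)))) := by
          have hln := (hlpos (j + 1)).ne'
          have hc' : c (j + 1) * ‖l (j + 1)‖ = ‖R (j + 1)‖ := by
            rw [hc]; exact div_mul_cancel₀ _ hln
          rw [hsplit, ← hc']
          ring
        rw [heq]
        refine mul_le_mul_of_nonneg_left ?_ (le_of_lt (hQpos (j + 1 + 1) n))
        exact mul_le_mul_of_nonneg_left hxk (norm_nonneg _)
      calc K * C n
          ≤ K * ((∏ i ∈ Icc 1 n, ‖l i‖) * ‖x 1‖ + ∑ k ∈ Icc 1 n, (∏ i ∈ Icc 1 n, ‖l i‖) *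
              (K * c k * (‖x 1‖ * ∏ j ∈ Icc 1 (k - 1), (1 + K * c j)))) := by
            apply mul_le_mul_of_nonneg_left _ hK0
            exact add_le_add_right (Finset.sum_le_sum hsum) _
        _ = (∏ i ∈ Icc 1 n, ‖l i‖) * (K * ‖x 1‖ * ∏ k ∈ Icc 1 n, (1 + K * c k)) := by
            rw [prod_one_add_eq (fun k => K * c k) n]
            simp only [mul_add, Finset.mul_sum, mul_one]
            congr 1
            · ring
            · exact Finset.sum_congr rfl fun k _ => by ring
  -- conclude
  intro n hn
  obtain ⟨m, rfl⟩ : ∃ m, n = m + 1 := ⟨n - 1, by omega⟩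
  simp only [Nat.add_sub_cancel]
  refine (main m).trans ?_
  have hGS : ∏ k ∈ Icc 1 m, (1 + K * c k)
      ≤ Real.exp (K * ∑' k : ℕ, ‖R (k + 1)‖ / ‖l (k + 1)‖) := by
    have h1 : ∏ k ∈ Icc 1 m, (1 + K * c k) ≤ ∏ k ∈ Icc 1 m, Real.exp (K * c k) :=
      Finset.prod_le_prod (fun k _ => by have := hc0 k; positivity)
        (fun k _ => by have := Real.add_one_le_exp (K * c k); linarith)
    rw [← Real.exp_sum] at h1
    refine h1.trans (Real.exp_le_exp.mpr ?_)
    rw [← Finset.mul_sum]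
    apply mul_le_mul_of_nonneg_left _ hK0
    have h2 : ∀ m : ℕ, ∑ k ∈ Icc 1 m, c k = ∑ k ∈ range m, c (k + 1) := by
      intro m
      induction m with
      | zero => simp
      | succ m ih =>
        rw [Finset.sum_Icc_succ_top (Nat.le_add_left 1 m), Finset.sum_range_succ, ih]
    rw [h2]
    have h3 := Summable.sum_le_tsum (range m) (fun i _ => hc0 (i + 1)) hS
    simpa [hc] using h3
  calc (∏ i ∈ Icc 1 m, ‖l i‖) * (K * ‖x 1‖ * ∏ k ∈ Icc 1 m, (1 + K * c k))
      ≤ (∏ i ∈ Icc 1 m, ‖l i‖) *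
          (K * ‖x 1‖ * Real.exp (K * ∑' k : ℕ, ‖R (k + 1)‖ / ‖l (k + 1)‖)) := by
        apply mul_le_mul_of_nonneg_left _ (le_of_lt (hQpos 1 m))
        exact mul_le_mul_of_nonneg_left hGS (mul_nonneg hK0 (norm_nonneg _))
    _ = (∏ i ∈ Icc 1 m, ‖l i‖) *
          Real.exp (K * ∑' k : ℕ, ‖R (k + 1)‖ / ‖l (k + 1)‖) * K * ‖x 1‖ := by ring
end

section
/- Asymptotics in the bounded (elliptic) case: under the hypotheses Σ_{k=1}^∞ ‖R_k‖/|λ_k| < ∞, the existence of M with ∏_{l=n+1}^m |λ_l| ≥ 1/M for all m ≥ n, and sup_n ∏_{l=1}^n |λ_l| < ∞, every solution x of x_{n+1} = (Λ_n + R_n)x_n with Λ_n = diag(λ_n, 1/λ_n) satisfies: the limit lim_{n→∞} (∏_{l=1}^{n-1} Λ_l)^{-1} x_n exists, the series Σ_{k=1}^∞ (∏_{l=1}^k Λ_l)^{-1} R_k x_k converges absolutely, and the limit equals x_1 + Σ_{k=1}^∞ (∏_{l=1}^k Λ_l)^{-1} R_k x_k. -/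
open Matrix Filter

lemma diag2_norm_le (a b : ℂ) :
    ‖Matrix.toEuclideanCLM (𝕜 := ℂ) (Matrix.diagonal ![a, b])‖ ≤ max ‖a‖ ‖b‖ := by
  apply ContinuousLinearMap.opNorm_le_bound _ (le_max_of_le_left (norm_nonneg a))
  intro v
  have h1 : ∀ i : Fin 2, (Matrix.toEuclideanCLM (𝕜 := ℂ) (Matrix.diagonal ![a, b]) v) i
      = (![a, b] i) * v i := by
    intro i
    have := Matrix.ofLp_toEuclideanCLM (𝕜 := ℂ) (Matrix.diagonal ![a, b]) v
    have h2 : WithLp.ofLp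
        (Matrix.toEuclideanCLM (𝕜 := ℂ) (Matrix.diagonal ![a, b]) v) i = _ := congrFun this i
    simpa [Matrix.toLin'_apply, Matrix.mulVec_diagonal] using h2
  rw [EuclideanSpace.norm_eq, EuclideanSpace.norm_eq]
  rw [← Real.sqrt_sq (by positivity : (0:ℝ) ≤ max ‖a‖ ‖b‖ * Real.sqrt (∑ i, ‖v i‖ ^ 2))]
  apply Real.sqrt_le_sqrt
  rw [mul_pow, Real.sq_sqrt (by positivity), Finset.mul_sum]
  apply Finset.sum_le_sum
  intro i _
  rw [h1 i, norm_mul, mul_pow]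
  gcongr
  fin_cases i
  · exact le_max_left _ _
  · exact le_max_right _ _

lemma diag2_mul_apply (a b c d : ℂ) (v : EuclideanSpace ℂ (Fin 2)) :
    Matrix.toEuclideanCLM (𝕜 := ℂ) (Matrix.diagonal ![a, b])
      (Matrix.toEuclideanCLM (𝕜 := ℂ) (Matrix.diagonal ![c, d]) v)
    = Matrix.toEuclideanCLM (𝕜 := ℂ) (Matrix.diagonal ![a * c, b * d]) v := by
  rw [← ContinuousLinearMap.mul_apply, ← _root_.map_mul (Matrix.toEuclideanCLM (𝕜 := ℂ)), Matrix.diagonal_mul_diagonal]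
  have hv : (fun i : Fin 2 => ![a, b] i * ![c, d] i) = ![a * c, b * d] := by
    ext i; fin_cases i <;> simp
  rw [hv]

lemma diag2_one : Matrix.toEuclideanCLM (𝕜 := ℂ) (Matrix.diagonal ![(1:ℂ), 1]) = 1 := by
  have h : ![(1:ℂ), 1] = fun _ => 1 := by ext i; fin_cases i <;> rfl
  rw [h, Matrix.diagonal_one, _root_.map_one (Matrix.toEuclideanCLM (𝕜 := ℂ))]
theorem asymptotics_elliptic_case
    (l : ℕ → ℂ) (hl : ∀ n, l n ≠ 0)
    (R : ℕ → EuclideanSpace ℂ (Fin 2) →L[ℂ] EuclideanSpace ℂ (Fin 2))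
    (hS : Summable fun k : ℕ => ‖R (k + 1)‖ / ‖l (k + 1)‖)
    (M : ℝ) (hM : 0 < M)
    (hprod : ∀ m n : ℕ, n ≤ m → (1 : ℝ) / M ≤ ∏ i ∈ Finset.Icc (n + 1) m, ‖l i‖)
    (hbdd : ∃ C : ℝ, ∀ n : ℕ, ∏ i ∈ Finset.Icc 1 n, ‖l i‖ ≤ C)
    (x : ℕ → EuclideanSpace ℂ (Fin 2))
    (hx : ∀ n, 1 ≤ n →
      x (n + 1) =
        (Matrix.toEuclideanCLM (𝕜 := ℂ) (Matrix.diagonal ![l n, (l n)⁻¹]) + R n) (x n)) :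
    -- `ΛinvProd k` is the inverse of the product `Λ_1 ⋯ Λ_k` of the diagonal matrices
    let ΛinvProd : ℕ → EuclideanSpace ℂ (Fin 2) →L[ℂ] EuclideanSpace ℂ (Fin 2) :=
      fun k => Matrix.toEuclideanCLM (𝕜 := ℂ)
        (Matrix.diagonal ![(∏ i ∈ Finset.Icc 1 k, l i)⁻¹, ∏ i ∈ Finset.Icc 1 k, l i])
    (Summable fun k : ℕ => ‖ΛinvProd (k + 1) ((R (k + 1)) (x (k + 1)))‖) ∧
      Tendsto (fun n : ℕ => ΛinvProd (n - 1) (x n)) atTop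
        (nhds (x 1 + ∑' k : ℕ, ΛinvProd (k + 1) ((R (k + 1)) (x (k + 1))))) := by
  intro ΛinvProd
  obtain ⟨C, hC⟩ := hbdd
  set P : ℕ → ℂ := fun n => ∏ i ∈ Finset.Icc 1 n, l i with hPdef
  have hΛeq : ∀ k, ΛinvProd k
      = Matrix.toEuclideanCLM (𝕜 := ℂ) (Matrix.diagonal ![(P k)⁻¹, P k]) := fun k => rfl
  have hPne : ∀ n, P n ≠ 0 := fun n => Finset.prod_ne_zero_iff.2 fun i _ => hl i
  have hPnorm : ∀ n, ‖P n‖ = ∏ i ∈ Finset.Icc 1 n, ‖l i‖ := fun n => norm_prod _ _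
  have hplb : ∀ n, 1 / M ≤ ‖P n‖ := by
    intro n
    rw [hPnorm]
    simpa using hprod n 0 (Nat.zero_le n)
  have hppos : ∀ n, 0 < ‖P n‖ := fun n => norm_pos_iff.2 (hPne n)
  have hpub : ∀ n, ‖P n‖ ≤ C := fun n => (hPnorm n) ▸ hC n
  have hP0 : P 0 = 1 := by
    rw [hPdef]
    simp
  set K : ℝ := max M C with hKdef
  have hK : 0 < K := lt_of_lt_of_le hM (le_max_left _ _)
  -- norm bounds
  have hinvM : ∀ n, ‖(P n)⁻¹‖ ≤ M := by
    intro n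
    rw [norm_inv, inv_le_comm₀ (hppos n) hM]
    rw [one_div] at hplb
    exact hplb n
  have hΛinv : ∀ n, ‖ΛinvProd n‖ ≤ K := by
    intro n
    rw [hΛeq]
    refine (diag2_norm_le _ _).trans (max_le ?_ ?_)
    · exact (hinvM n).trans (le_max_left _ _)
    · exact (hpub n).trans (le_max_right _ _)
  set ΛProd : ℕ → EuclideanSpace ℂ (Fin 2) →L[ℂ] EuclideanSpace ℂ (Fin 2) :=
    fun n => Matrix.toEuclideanCLM (𝕜 := ℂ) (Matrix.diagonal ![P n, (P n)⁻¹]) with hΛPdef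
  have hΛP : ∀ n, ‖ΛProd n‖ ≤ K := by
    intro n
    refine (diag2_norm_le _ _).trans (max_le ?_ ?_)
    · exact (hpub n).trans (le_max_right _ _)
    · exact (hinvM n).trans (le_max_left _ _)
  have hinvP : ∀ n v, ΛProd n (ΛinvProd n v) = v := by
    intro n v
    rw [hΛeq, hΛPdef]
    rw [diag2_mul_apply, mul_inv_cancel₀ (hPne n), inv_mul_cancel₀ (hPne n), diag2_one]
    rfl
  -- the shift identity
  have hPs : ∀ n, P (n + 1) = P n * l (n + 1) := by
    intro n
    rw [hPdef]
    exact Finset.prod_Icc_succ_top (Nat.le_add_left 1 n) _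
  have hstep : ∀ n v, ΛinvProd (n + 1)
      (Matrix.toEuclideanCLM (𝕜 := ℂ) (Matrix.diagonal ![l (n + 1), (l (n + 1))⁻¹]) v)
      = ΛinvProd n v := by
    intro n v
    rw [hΛeq, hΛeq, diag2_mul_apply]
    have e1 : (P (n + 1))⁻¹ * l (n + 1) = (P n)⁻¹ := by
      rw [hPs, mul_inv, mul_assoc, inv_mul_cancel₀ (hl (n + 1)), mul_one]
    have e2 : P (n + 1) * (l (n + 1))⁻¹ = P n := by
      rw [hPs, mul_assoc, mul_inv_cancel₀ (hl (n + 1)), mul_one]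
    rw [e1, e2]
  -- the sequence y and the increments t
  set y : ℕ → EuclideanSpace ℂ (Fin 2) := fun n => ΛinvProd n (x (n + 1)) with hydef
  set t : ℕ → EuclideanSpace ℂ (Fin 2) := fun k => ΛinvProd k (R k (x k)) with htdef
  have hy0 : y 0 = x 1 := by
    rw [hydef]
    simp only [hΛeq, hP0, inv_one]
    rw [diag2_one]
    rfl
  have hy : ∀ n, y (n + 1) = y n + t (n + 1) := by
    intro n
    rw [hydef, htdef]
    simp only
    rw [hx (n + 1) (Nat.le_add_left 1 n), ContinuousLinearMap.add_apply, map_add, hstep]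
  -- bound on x in terms of y
  have hxy : ∀ n, ‖x (n + 1)‖ ≤ K * ‖y n‖ := by
    intro n
    calc ‖x (n + 1)‖ = ‖ΛProd n (y n)‖ := by rw [hydef]; simp only; rw [hinvP]
    _ ≤ ‖ΛProd n‖ * ‖y n‖ := ContinuousLinearMap.le_opNorm _ _
    _ ≤ K * ‖y n‖ := by gcongr; exact hΛP n
  have ht : ∀ n, ‖t (n + 1)‖ ≤ K * ‖R (n + 1)‖ * (K * ‖y n‖) := by
    intro n
    calc ‖t (n + 1)‖ ≤ ‖ΛinvProd (n + 1)‖ * ‖R (n + 1) (x (n + 1))‖ :=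
          ContinuousLinearMap.le_opNorm _ _
    _ ≤ K * (‖R (n + 1)‖ * ‖x (n + 1)‖) := by
        apply mul_le_mul (hΛinv _) (ContinuousLinearMap.le_opNorm _ _) (norm_nonneg _) hK.le
    _ ≤ K * (‖R (n + 1)‖ * (K * ‖y n‖)) := by gcongr; exact hxy n
    _ = K * ‖R (n + 1)‖ * (K * ‖y n‖) := by ring
  -- summability of ‖R (k+1)‖
  have hlub : ∀ k, ‖l (k + 1)‖ ≤ C * M := by
    intro k
    have h1 : ‖P (k + 1)‖ = ‖P k‖ * ‖l (k + 1)‖ := by rw [hPs, norm_mul]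
    have h2 := hplb k
    have h3 := hpub (k + 1)
    have h4 := norm_nonneg (l (k + 1))
    rw [div_le_iff₀ hM] at h2
    nlinarith [hppos k]
  have hb : Summable fun k : ℕ => ‖R (k + 1)‖ := by
    apply Summable.of_nonneg_of_le (fun k => norm_nonneg _) (fun k => ?_) (hS.mul_left (C * M))
    have hlpos : (0:ℝ) < ‖l (k + 1)‖ := norm_pos_iff.2 (hl _)
    calc ‖R (k + 1)‖ = ‖R (k + 1)‖ / ‖l (k + 1)‖ * ‖l (k + 1)‖ :=
          (div_mul_cancel₀ _ hlpos.ne').symm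
    _ ≤ ‖R (k + 1)‖ / ‖l (k + 1)‖ * (C * M) :=
          mul_le_mul_of_nonneg_left (hlub k) (by positivity)
    _ = C * M * (‖R (k + 1)‖ / ‖l (k + 1)‖) := mul_comm _ _
  -- exponential bound on y
  have hyB : ∀ n, ‖y n‖ ≤ ‖x 1‖ * Real.exp (K * K * ∑ k ∈ Finset.range n, ‖R (k + 1)‖) := by
    intro n
    induction n with
    | zero => simp [hy0]
    | succ n ih =>
      have h1 : ‖y (n + 1)‖ ≤ ‖y n‖ * (1 + K * K * ‖R (n + 1)‖) := by
        rw [hy n]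
        calc ‖y n + t (n + 1)‖ ≤ ‖y n‖ + ‖t (n + 1)‖ := norm_add_le _ _
        _ ≤ ‖y n‖ + K * ‖R (n + 1)‖ * (K * ‖y n‖) := by linarith [ht n]
        _ = ‖y n‖ * (1 + K * K * ‖R (n + 1)‖) := by ring
      calc ‖y (n + 1)‖ ≤ ‖y n‖ * (1 + K * K * ‖R (n + 1)‖) := h1
      _ ≤ (‖x 1‖ * Real.exp (K * K * ∑ k ∈ Finset.range n, ‖R (k + 1)‖))
            * Real.exp (K * K * ‖R (n + 1)‖) := by
          apply mul_le_mul ih ?_ (by positivity) (by positivity)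
          linarith [Real.add_one_le_exp (K * K * ‖R (n + 1)‖)]
      _ = ‖x 1‖ * Real.exp (K * K * ∑ k ∈ Finset.range (n + 1), ‖R (k + 1)‖) := by
          rw [Finset.sum_range_succ, mul_add, Real.exp_add, mul_assoc]
  set B : ℝ := ‖x 1‖ * Real.exp (K * K * ∑' k : ℕ, ‖R (k + 1)‖) with hBdef
  have hyB' : ∀ n, ‖y n‖ ≤ B := by
    intro n
    refine (hyB n).trans ?_
    rw [hBdef]
    gcongr
    exact hb.sum_le_tsum _ (fun i _ => norm_nonneg _)
  have hB0 : 0 ≤ B := le_trans (norm_nonneg _) (hyB' 0)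
  -- summability of the increments
  have hsum1 : Summable fun k : ℕ => ‖t (k + 1)‖ := by
    apply Summable.of_nonneg_of_le (fun k => norm_nonneg _) (fun k => ?_)
      (hb.mul_left (K * K * B))
    calc ‖t (k + 1)‖ ≤ K * ‖R (k + 1)‖ * (K * ‖y k‖) := ht k
    _ ≤ K * ‖R (k + 1)‖ * (K * B) := by gcongr; exact hyB' k
    _ = K * K * B * ‖R (k + 1)‖ := by ring
  have hsum : Summable fun k : ℕ => t (k + 1) := Summable.of_norm hsum1
  constructor
  · exact hsum1
  -- partial sums
  have hpart : ∀ n, y n = x 1 + ∑ k ∈ Finset.range n, t (k + 1) := by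
    intro n
    induction n with
    | zero => simpa using hy0
    | succ n ih => rw [hy n, ih, Finset.sum_range_succ, add_assoc]
  have hylim : Tendsto y atTop (nhds (x 1 + ∑' k : ℕ, t (k + 1))) := by
    refine (Tendsto.const_add (x 1) hsum.hasSum.tendsto_sum_nat).congr fun n => ?_
    exact (hpart n).symm
  have h2 : Tendsto (fun n : ℕ => y (n - 1)) atTop (nhds (x 1 + ∑' k : ℕ, t (k + 1))) :=
    hylim.comp (tendsto_sub_atTop_nat 1)
  refine h2.congr' ?_
  filter_upwards [eventually_ge_atTop 1] with n hn
  have h3 : n - 1 + 1 = n := by omega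
  rw [hydef]
  simp only [h3]
end

section
/- Asymptotics in the unbounded (hyperbolic) case: under the hypotheses Σ_{k=1}^∞ ‖R_k‖/|λ_k| < ∞, the existence of M with ∏_{l=n+1}^m |λ_l| ≥ 1/M for all m ≥ n, and ∏_{l=1}^n λ_l → ∞ in modulus as n → ∞, every solution x of x_{n+1} = (diag(λ_n,1/λ_n) + R_n)x_n satisfies: the limit lim_{n→∞} x_n / (∏_{l=1}^{n-1} λ_l) exists, the series Σ_{k=1}^∞ R_k x_k / (∏_{l=1}^k λ_l) converges absolutely, and the limit equals P·(x_1 + Σ_{k=1}^∞ R_k x_k/∏_{l=1}^k λ_l), where P = diag(1,0). -/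
open Matrix Filter Finset

lemma diagApply (d : Fin 2 → ℂ) (v : EuclideanSpace ℂ (Fin 2)) (i : Fin 2) :
    (Matrix.toEuclideanCLM (𝕜 := ℂ) (Matrix.diagonal d)) v i = d i * v i := by
  have h : (Matrix.toEuclideanCLM (𝕜 := ℂ) (Matrix.diagonal d)) v =
      (WithLp.equiv 2 _).symm ((Matrix.diagonal d).mulVec (WithLp.equiv 2 _ v)) := rfl
  rw [h]; simp [Matrix.mulVec_diagonal]
  fin_cases i <;> simp

lemma tendsto_of_components (f : ℕ → EuclideanSpace ℂ (Fin 2)) (L : EuclideanSpace ℂ (Fin 2))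
    (h : ∀ i, Tendsto (fun n => f n i) atTop (nhds (L i))) : Tendsto f atTop (nhds L) := by
  rw [(PiLp.continuousLinearEquiv 2 ℂ
      (fun _ : Fin 2 => ℂ)).toHomeomorph.isEmbedding.tendsto_nhds_iff, tendsto_pi_nhds]
  intro i
  exact h i

lemma comp_le_norm (v : EuclideanSpace ℂ (Fin 2)) (i : Fin 2) : ‖v i‖ ≤ ‖v‖ := by
  rw [EuclideanSpace.norm_eq]
  have h1 : ‖v i‖ ^ 2 ≤ ∑ j, ‖v j‖ ^ 2 :=
    Finset.single_le_sum (f := fun j => ‖v j‖ ^ 2) (fun j _ => sq_nonneg _) (Finset.mem_univ i)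
  calc ‖v i‖ = Real.sqrt (‖v i‖ ^ 2) := by rw [Real.sqrt_sq (norm_nonneg _)]
    _ ≤ _ := Real.sqrt_le_sqrt h1

lemma norm_le_comps (v : EuclideanSpace ℂ (Fin 2)) : ‖v‖ ≤ ‖v 0‖ + ‖v 1‖ := by
  rw [EuclideanSpace.norm_eq]
  rw [show (∑ j, ‖v j‖ ^ 2) = ‖v 0‖^2 + ‖v 1‖^2 by simp [Fin.sum_univ_two]]
  have h : ‖v 0‖^2 + ‖v 1‖^2 ≤ (‖v 0‖ + ‖v 1‖)^2 := by nlinarith [norm_nonneg (v 0), norm_nonneg (v 1)]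
  calc Real.sqrt (‖v 0‖^2 + ‖v 1‖^2) ≤ Real.sqrt ((‖v 0‖ + ‖v 1‖)^2) := Real.sqrt_le_sqrt h
    _ = _ := Real.sqrt_sq (by positivity)

lemma prod_one_add (a : ℕ → ℝ) (n : ℕ) :
    (∏ j ∈ range n, (1 + a j)) = 1 + ∑ j ∈ range n, a j * ∏ i ∈ range j, (1 + a i) := by
  induction n with
  | zero => simp
  | succ n ih => rw [Finset.prod_range_succ, Finset.sum_range_succ, ih]; ring

lemma gronwall (u a : ℕ → ℝ) (C0 : ℝ) (hC0 : 0 ≤ C0) (ha : ∀ n, 0 ≤ a n)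
    (h : ∀ n, u n ≤ C0 + ∑ j ∈ range n, a j * u j) :
    ∀ n, u n ≤ C0 * ∏ j ∈ range n, (1 + a j) := by
  intro n
  induction n using Nat.strong_induction_on with
  | _ n ih =>
    calc u n ≤ C0 + ∑ j ∈ range n, a j * u j := h n
      _ ≤ C0 + ∑ j ∈ range n, a j * (C0 * ∏ i ∈ range j, (1 + a i)) := by
          gcongr with j hj
          · exact ha j
          · exact ih j (Finset.mem_range.mp hj)
      _ = C0 * ∏ j ∈ range n, (1 + a j) := by
          rw [prod_one_add, mul_add, Finset.mul_sum, mul_one]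
          congr 1
          apply Finset.sum_congr rfl; intro j _; ring

theorem asymptotics_hyperbolic_case
    (l : ℕ → ℂ) (hl : ∀ n, l n ≠ 0)
    (R : ℕ → EuclideanSpace ℂ (Fin 2) →L[ℂ] EuclideanSpace ℂ (Fin 2))
    (hS : Summable fun k : ℕ => ‖R (k + 1)‖ / ‖l (k + 1)‖)
    (M : ℝ) (hM : 0 < M)
    (hprod : ∀ m n : ℕ, n ≤ m → (1 : ℝ) / M ≤ ∏ i ∈ Finset.Icc (n + 1) m, ‖l i‖)
    (hinf : Tendsto (fun n : ℕ => ‖∏ i ∈ Finset.Icc 1 n, l i‖) atTop atTop)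
    (x : ℕ → EuclideanSpace ℂ (Fin 2))
    (hx : ∀ n, 1 ≤ n →
      x (n + 1) =
        (Matrix.toEuclideanCLM (𝕜 := ℂ) (Matrix.diagonal ![l n, (l n)⁻¹]) + R n) (x n)) :
    let P : EuclideanSpace ℂ (Fin 2) →L[ℂ] EuclideanSpace ℂ (Fin 2) :=
      Matrix.toEuclideanCLM (𝕜 := ℂ) (Matrix.diagonal ![1, 0])
    (Summable fun k : ℕ => ‖(∏ i ∈ Finset.Icc 1 (k + 1), l i)⁻¹ • (R (k + 1)) (x (k + 1))‖) ∧
      Tendsto (fun n : ℕ => (∏ i ∈ Finset.Icc 1 (n - 1), l i)⁻¹ • x n) atTop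
        (nhds (P (x 1 +
          ∑' k : ℕ, (∏ i ∈ Finset.Icc 1 (k + 1), l i)⁻¹ • (R (k + 1)) (x (k + 1))))) := by
  intro P
  set p : ℕ → ℂ := fun n => ∏ i ∈ Finset.Icc 1 n, l i with hpdef
  simp only [show ∀ k, (∏ i ∈ Finset.Icc 1 k, l i) = p k from fun k => rfl]
  -- basic product facts
  have hp0 : p 0 = 1 := by simp [hpdef]
  have hps : ∀ n : ℕ, p (n + 1) = p n * l (n + 1) := by
    intro n
    exact Finset.prod_Icc_succ_top (by omega) l
  have hpne : ∀ n, p n ≠ 0 := by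
    intro n
    induction n with
    | zero => rw [hp0]; exact one_ne_zero
    | succ n ih => rw [hps]; exact mul_ne_zero ih (hl _)
  have hM1 : (1 : ℝ) ≤ M := by
    have := hprod 0 0 le_rfl
    simp at this
    have h2 : M * M⁻¹ = 1 := mul_inv_cancel₀ (ne_of_gt hM)
    nlinarith
  have hnp : ∀ n, ‖p n‖ = ∏ i ∈ Finset.Icc 1 n, ‖l i‖ := by
    intro n; rw [hpdef]; exact norm_prod _ _
  have hplb : ∀ n, 1 / M ≤ ‖p n‖ := by
    intro n
    rw [hnp]
    simpa using hprod n 0 (Nat.zero_le n)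
  have hppos : ∀ n, 0 < ‖p n‖ := fun n => norm_pos_iff.mpr (hpne n)
  have hpinv : ∀ n, ‖p n‖⁻¹ ≤ M := by
    intro n
    rw [inv_le_comm₀ (hppos n) hM]
    rw [inv_eq_one_div]
    exact hplb n
  have hmono : ∀ n m : ℕ, n ≤ m → ‖p n‖ ≤ M * ‖p m‖ := by
    intro n m hnm
    have hsplit : ‖p m‖ = ‖p n‖ * ∏ i ∈ Finset.Icc (n+1) m, ‖l i‖ := by
      rw [hnp, hnp, show Finset.Icc (n+1) m = Finset.Ioc n m from Finset.Icc_add_one_left_eq_Ioc n m,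
        show Finset.Icc 1 n = Finset.Ioc 0 n from (Finset.Icc_add_one_left_eq_Ioc 0 n),
        show Finset.Icc 1 m = Finset.Ioc 0 m from (Finset.Icc_add_one_left_eq_Ioc 0 m)]
      exact (Finset.prod_Ioc_consecutive _ (Nat.zero_le n) hnm).symm
    have h2 := hprod m n hnm
    have h3 : ‖p n‖ * (1 / M) ≤ ‖p n‖ * ∏ i ∈ Finset.Icc (n+1) m, ‖l i‖ := by
      exact mul_le_mul_of_nonneg_left h2 (norm_nonneg _)
    rw [← hsplit] at h3
    rw [mul_one_div, div_le_iff₀ hM, mul_comm (‖p m‖)] at h3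
    exact h3
  -- componentwise recursion
  have hrec : ∀ n : ℕ, 1 ≤ n → (x (n+1) 0 = l n * x n 0 + R n (x n) 0 ∧
      x (n+1) 1 = (l n)⁻¹ * x n 1 + R n (x n) 1) := by
    intro n hn
    have h := hx n hn
    constructor
    · rw [h]
      show (Matrix.toEuclideanCLM (𝕜 := ℂ) (Matrix.diagonal ![l n, (l n)⁻¹])) (x n) 0
          + R n (x n) 0 = _
      rw [diagApply]
      simp
    · rw [h]
      show (Matrix.toEuclideanCLM (𝕜 := ℂ) (Matrix.diagonal ![l n, (l n)⁻¹])) (x n) 1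
          + R n (x n) 1 = _
      rw [diagApply]
      simp
  -- closed forms
  have hA : ∀ n : ℕ, x (n+1) 0 = p n * (x 1 0 + ∑ j ∈ range n, (p (j+1))⁻¹ * (R (j+1) (x (j+1)) 0)) := by
    intro n
    induction n with
    | zero => simp [hp0]
    | succ n ih =>
      rw [(hrec (n+1) (by omega)).1, ih, Finset.sum_range_succ, hps n]
      have cc : (p n * l (n+1)) * (p n * l (n+1))⁻¹ = 1 :=
        mul_inv_cancel₀ (mul_ne_zero (hpne n) (hl _))
      linear_combination (-(R (n+1)) (x (n+1)) 0) * cc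
  have hB : ∀ n : ℕ, p n * x (n+1) 1 = x 1 1 + ∑ j ∈ range n, p (j+1) * (R (j+1) (x (j+1)) 1) := by
    intro n
    induction n with
    | zero => simp [hp0]
    | succ n ih =>
      rw [(hrec (n+1) (by omega)).2, Finset.sum_range_succ, hps n]
      have cc : l (n+1) * (l (n+1))⁻¹ = 1 := mul_inv_cancel₀ (hl _)
      linear_combination ih + p n * x (n+1) 1 * cc
  -- boundedness via Gronwall
  set ρ : ℕ → ℝ := fun k => ‖R (k+1)‖ / ‖l (k+1)‖ with hρdef
  have hρ0 : ∀ k, 0 ≤ ρ k := fun k => div_nonneg (norm_nonneg _) (norm_nonneg _)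
  set u : ℕ → ℝ := fun n => ‖x (n+1)‖ / ‖p n‖ with hudef
  have hu0 : ∀ n, 0 ≤ u n := fun n => div_nonneg (norm_nonneg _) (norm_nonneg _)
  have hnx : ∀ n, ‖x (n+1)‖ = u n * ‖p n‖ := by
    intro n
    rw [hudef]
    exact (div_mul_cancel₀ _ (ne_of_gt (hppos n))).symm
  have hkey : ∀ j, ‖(R (j+1)) (x (j+1))‖ ≤ ρ j * u j * ‖p (j+1)‖ := by
    intro j
    have h1 : ‖(R (j+1)) (x (j+1))‖ ≤ ‖R (j+1)‖ * ‖x (j+1)‖ := (R (j+1)).le_opNorm _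
    have h2 : ρ j * u j * ‖p (j+1)‖ = ‖R (j+1)‖ * (u j * ‖p j‖) := by
      have hlne : ‖l (j+1)‖ ≠ 0 := norm_ne_zero_iff.mpr (hl _)
      have h3 : ρ j * ‖l (j+1)‖ = ‖R (j+1)‖ := div_mul_cancel₀ _ hlne
      calc ρ j * u j * ‖p (j+1)‖ = (ρ j * ‖l (j+1)‖) * (u j * ‖p j‖) := by
            rw [hps j, norm_mul]; ring
        _ = ‖R (j+1)‖ * (u j * ‖p j‖) := by rw [h3]
    rw [h2, ← hnx j]
    exact h1
  have hGb : ∀ j, ‖(p (j+1))⁻¹ * (R (j+1)) (x (j+1)) 0‖ ≤ ρ j * u j := by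
    intro j
    rw [norm_mul, norm_inv]
    have h1 : ‖(R (j+1)) (x (j+1)) 0‖ ≤ ρ j * u j * ‖p (j+1)‖ :=
      (comp_le_norm _ 0).trans (hkey j)
    rw [inv_mul_le_iff₀ (hppos (j+1))]
    linarith [h1]
  have hHb : ∀ j, ‖p (j+1) * (R (j+1)) (x (j+1)) 1‖ ≤ ρ j * u j * ‖p (j+1)‖^2 := by
    intro j
    rw [norm_mul]
    have h1 : ‖(R (j+1)) (x (j+1)) 1‖ ≤ ρ j * u j * ‖p (j+1)‖ :=
      (comp_le_norm _ 1).trans (hkey j)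
    calc ‖p (j+1)‖ * ‖(R (j+1)) (x (j+1)) 1‖ ≤ ‖p (j+1)‖ * (ρ j * u j * ‖p (j+1)‖) := by
          exact mul_le_mul_of_nonneg_left h1 (norm_nonneg _)
      _ = ρ j * u j * ‖p (j+1)‖^2 := by ring
  set C0 : ℝ := (1 + M^2) * (‖x 1 0‖ + ‖x 1 1‖) with hC0def
  have hC0 : 0 ≤ C0 := by positivity
  set a : ℕ → ℝ := fun j => (1 + M^2) * ρ j with hadef
  have ha0 : ∀ j, 0 ≤ a j := fun j => mul_nonneg (by positivity) (hρ0 j)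
  have hineq : ∀ n, u n ≤ C0 + ∑ j ∈ range n, a j * u j := by
    intro n
    have bA : ‖x (n+1) 0‖ ≤ ‖p n‖ * (‖x 1 0‖ + ∑ j ∈ range n, ρ j * u j) := by
      rw [hA n, norm_mul]
      apply mul_le_mul_of_nonneg_left _ (norm_nonneg _)
      calc ‖x 1 0 + ∑ j ∈ range n, (p (j+1))⁻¹ * (R (j+1)) (x (j+1)) 0‖
          ≤ ‖x 1 0‖ + ‖∑ j ∈ range n, (p (j+1))⁻¹ * (R (j+1)) (x (j+1)) 0‖ := norm_add_le _ _
        _ ≤ ‖x 1 0‖ + ∑ j ∈ range n, ‖(p (j+1))⁻¹ * (R (j+1)) (x (j+1)) 0‖ := by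
            gcongr
            exact norm_sum_le _ _
        _ ≤ ‖x 1 0‖ + ∑ j ∈ range n, ρ j * u j := by
            gcongr with j hj
            exact hGb j
    have bBinner : ‖p n * x (n+1) 1‖ ≤ ‖x 1 1‖ + ∑ j ∈ range n, (ρ j * u j) * ‖p (j+1)‖^2 := by
      rw [hB n]
      calc ‖x 1 1 + ∑ j ∈ range n, p (j+1) * (R (j+1)) (x (j+1)) 1‖
          ≤ ‖x 1 1‖ + ‖∑ j ∈ range n, p (j+1) * (R (j+1)) (x (j+1)) 1‖ := norm_add_le _ _
        _ ≤ ‖x 1 1‖ + ∑ j ∈ range n, ‖p (j+1) * (R (j+1)) (x (j+1)) 1‖ := by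
            gcongr
            exact norm_sum_le _ _
        _ ≤ _ := by
            gcongr with j hj
            exact hHb j
    have bB : ‖x (n+1) 1‖ ≤ M^2 * ‖p n‖ * (‖x 1 1‖ + ∑ j ∈ range n, ρ j * u j) := by
      have hx1 : ‖x (n+1) 1‖ = ‖p n‖⁻¹ * ‖p n * x (n+1) 1‖ := by
        rw [norm_mul, ← mul_assoc, inv_mul_cancel₀ (ne_of_gt (hppos n)), one_mul]
      rw [hx1]
      have hstep : ‖x 1 1‖ + ∑ j ∈ range n, (ρ j * u j) * ‖p (j+1)‖^2
          ≤ M^2 * ‖p n‖^2 * (‖x 1 1‖ + ∑ j ∈ range n, ρ j * u j) := by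
        have h1le : (1:ℝ) ≤ M^2 * ‖p n‖^2 := by
          have h4 : 1 ≤ ‖p n‖ * M := by
            rw [← div_le_iff₀ hM]
            exact hplb n
          nlinarith [mul_le_mul h4 h4 zero_le_one (by positivity : (0:ℝ) ≤ ‖p n‖ * M)]
        rw [mul_add]
        gcongr
        · nlinarith [norm_nonneg (x 1 1)]
        · rw [Finset.mul_sum]
          apply Finset.sum_le_sum
          intro j hj
          have hj' : j + 1 ≤ n := Finset.mem_range.mp hj
          have hm := hmono (j+1) n hj'
          have hρu : 0 ≤ ρ j * u j := mul_nonneg (hρ0 j) (hu0 j)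
          calc ρ j * u j * ‖p (j+1)‖^2 ≤ ρ j * u j * (M * ‖p n‖)^2 :=
                mul_le_mul_of_nonneg_left (pow_le_pow_left₀ (norm_nonneg _) hm 2) hρu
            _ = M^2 * ‖p n‖^2 * (ρ j * u j) := by ring
      calc ‖p n‖⁻¹ * ‖p n * x (n+1) 1‖
          ≤ ‖p n‖⁻¹ * (‖x 1 1‖ + ∑ j ∈ range n, (ρ j * u j) * ‖p (j+1)‖^2) :=
            mul_le_mul_of_nonneg_left bBinner (by positivity)
        _ ≤ ‖p n‖⁻¹ * (M^2 * ‖p n‖^2 * (‖x 1 1‖ + ∑ j ∈ range n, ρ j * u j)) :=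
            mul_le_mul_of_nonneg_left hstep (by positivity)
        _ = M^2 * ‖p n‖ * (‖x 1 1‖ + ∑ j ∈ range n, ρ j * u j) := by
            have hne : ‖p n‖ ≠ 0 := ne_of_gt (hppos n)
            have hne2 : ‖p n‖ ≠ 0 := hne
            field_simp
    have hcomb : ‖x (n+1)‖ ≤ (C0 + ∑ j ∈ range n, a j * u j) * ‖p n‖ := by
      calc ‖x (n+1)‖ ≤ ‖x (n+1) 0‖ + ‖x (n+1) 1‖ := norm_le_comps _
        _ ≤ ‖p n‖ * (‖x 1 0‖ + ∑ j ∈ range n, ρ j * u j)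
            + M^2 * ‖p n‖ * (‖x 1 1‖ + ∑ j ∈ range n, ρ j * u j) := add_le_add bA bB
        _ ≤ (C0 + ∑ j ∈ range n, a j * u j) * ‖p n‖ := by
            rw [hC0def, hadef]
            have h1 : ∀ j ∈ range n, ((fun j => (1 + M^2) * ρ j) j) * u j
                = (1 + M^2) * (ρ j * u j) := by intro j _; ring
            rw [Finset.sum_congr rfl h1, ← Finset.mul_sum]
            have hsum0 : 0 ≤ ∑ j ∈ range n, ρ j * u j :=
              Finset.sum_nonneg fun j _ => mul_nonneg (hρ0 j) (hu0 j)
            nlinarith [mul_nonneg (mul_nonneg (sq_nonneg M) (norm_nonneg (x 1 0))) (norm_nonneg (p n)),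
              mul_nonneg (norm_nonneg (x 1 1)) (norm_nonneg (p n))]
    rw [hudef]
    rw [div_le_iff₀ (hppos n)]
    exact hcomb
  have hgron := gronwall u a C0 hC0 ha0 hineq
  have hsa : Summable a := by
    rw [hadef]
    exact hS.mul_left _
  have hprodexp : ∀ n, (∏ j ∈ range n, (1 + a j)) ≤ Real.exp (∑' j, a j) := by
    intro n
    calc (∏ j ∈ range n, (1 + a j)) ≤ ∏ j ∈ range n, Real.exp (a j) := by
          apply Finset.prod_le_prod
          · intro j _; positivity
          · intro j _; linarith [Real.add_one_le_exp (a j)]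
      _ = Real.exp (∑ j ∈ range n, a j) := (Real.exp_sum _ _).symm
      _ ≤ Real.exp (∑' j, a j) := by
          apply Real.exp_le_exp.mpr
          exact Summable.sum_le_tsum _ (fun j _ => ha0 j) hsa
  set C : ℝ := C0 * Real.exp (∑' j, a j) with hCdef
  have hC : 0 ≤ C := mul_nonneg hC0 (Real.exp_pos _).le
  have huC : ∀ n, u n ≤ C := by
    intro n
    calc u n ≤ C0 * ∏ j ∈ range n, (1 + a j) := hgron n
      _ ≤ C := mul_le_mul_of_nonneg_left (hprodexp n) hC0
  have hxb : ∀ n, ‖x (n+1)‖ ≤ C * ‖p n‖ := by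
    intro n
    have := huC n
    rw [hudef, div_le_iff₀ (hppos n)] at this
    exact this
  -- summability
  have hterm : ∀ k, ‖(p (k+1))⁻¹ • (R (k+1)) (x (k+1))‖ ≤ C * ρ k := by
    intro k
    rw [norm_smul, norm_inv]
    calc ‖p (k+1)‖⁻¹ * ‖(R (k+1)) (x (k+1))‖
        ≤ ‖p (k+1)‖⁻¹ * (ρ k * u k * ‖p (k+1)‖) :=
          mul_le_mul_of_nonneg_left (hkey k) (by positivity)
      _ = ρ k * u k := by
          rw [mul_comm (ρ k * u k)]
          exact inv_mul_cancel_left₀ (ne_of_gt (hppos (k+1))) _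
      _ ≤ ρ k * C := mul_le_mul_of_nonneg_left (huC k) (hρ0 k)
      _ = C * ρ k := mul_comm _ _
  have hsum1 : Summable (fun k : ℕ => ‖(p (k+1))⁻¹ • (R (k+1)) (x (k+1))‖) :=
    Summable.of_nonneg_of_le (fun k => norm_nonneg _) hterm (hS.mul_left C)
  have hvsum : Summable (fun k : ℕ => (p (k+1))⁻¹ • (R (k+1)) (x (k+1))) :=
    hsum1.of_norm
  refine ⟨hsum1, ?_⟩
  -- components of the limit
  have hP : ∀ (v : EuclideanSpace ℂ (Fin 2)), P v 0 = v 0 ∧ P v 1 = 0 := by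
    intro v
    constructor
    · rw [show P v 0 = (![1,0] 0 : ℂ) * v 0 from diagApply _ v 0]
      simp
    · rw [show P v 1 = (![1,0] 1 : ℂ) * v 1 from diagApply _ v 1]
      simp
  have hT0 : (∑' k : ℕ, (p (k+1))⁻¹ • (R (k+1)) (x (k+1))) 0
      = ∑' k : ℕ, (p (k+1))⁻¹ * ((R (k+1)) (x (k+1)) 0) := by
    have hmap := (EuclideanSpace.proj (𝕜 := ℂ) (0 : Fin 2)).map_tsum hvsum
    simpa using hmap
  -- summability of component 0
  have hG : Summable (fun k : ℕ => (p (k+1))⁻¹ * ((R (k+1)) (x (k+1)) 0)) := by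
    apply Summable.of_norm
    apply Summable.of_nonneg_of_le (fun k => norm_nonneg _) (fun k => ?_) (hS.mul_left C)
    calc ‖(p (k+1))⁻¹ * ((R (k+1)) (x (k+1)) 0)‖ ≤ ρ k * u k := hGb k
      _ ≤ ρ k * C := mul_le_mul_of_nonneg_left (huC k) (hρ0 k)
      _ = C * ρ k := mul_comm _ _
  -- component 0 limit
  have h0 : Tendsto (fun n : ℕ => (p (n-1))⁻¹ * x n 0) atTop
      (nhds (x 1 0 + ∑' k : ℕ, (p (k+1))⁻¹ * ((R (k+1)) (x (k+1)) 0))) := by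
    have hps' := hG.hasSum.tendsto_sum_nat
    have hcomp := hps'.comp (tendsto_sub_atTop_nat 1)
    have hfull := (tendsto_const_nhds (α := ℕ) (f := atTop) (x := x 1 0)).add hcomp
    apply Tendsto.congr' _ hfull
    filter_upwards [eventually_ge_atTop 1] with n hn
    obtain ⟨m, rfl⟩ : ∃ m, n = m + 1 := ⟨n - 1, by omega⟩
    show x 1 0 + ∑ j ∈ range ((m+1)-1), (p (j+1))⁻¹ * ((R (j+1)) (x (j+1)) 0) = _
    simp only [Nat.add_sub_cancel]
    rw [hA m, ← mul_assoc, inv_mul_cancel₀ (hpne m), one_mul]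
  -- component 1 limit
  have hpinvtend : Tendsto (fun n : ℕ => (p n)⁻¹) atTop (nhds 0) := by
    rw [tendsto_zero_iff_norm_tendsto_zero]
    simp only [norm_inv]
    exact tendsto_inv_atTop_zero.comp hinf
  have hpm1 : Tendsto (fun n : ℕ => (p (n-1))⁻¹) atTop (nhds 0) :=
    hpinvtend.comp (tendsto_sub_atTop_nat 1)
  set f : ℕ → ℕ → ℂ := fun n k => if k < n - 1 then
      ((p (n-1))⁻¹ * (p (n-1))⁻¹) * (p (k+1) * ((R (k+1)) (x (k+1)) 1)) else 0 with hfdef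
  have hfb : ∀ n k, ‖f n k‖ ≤ M^2 * (C * ρ k) := by
    intro n k
    simp only [hfdef]
    by_cases hc : k < n - 1
    · rw [if_pos hc]
      have hst : ‖p (k+1)‖ * ‖p (n-1)‖⁻¹ ≤ M := by
        rw [← div_eq_mul_inv, div_le_iff₀ (hppos _)]
        exact hmono (k+1) (n-1) (by omega)
      have hcomp1 : ‖(R (k+1)) (x (k+1)) 1‖ ≤ (C * ρ k) * ‖p (k+1)‖ := by
        calc ‖(R (k+1)) (x (k+1)) 1‖ ≤ ρ k * u k * ‖p (k+1)‖ :=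
              (comp_le_norm _ 1).trans (hkey k)
          _ ≤ ρ k * C * ‖p (k+1)‖ := by
              apply mul_le_mul_of_nonneg_right _ (norm_nonneg _)
              exact mul_le_mul_of_nonneg_left (huC k) (hρ0 k)
          _ = (C * ρ k) * ‖p (k+1)‖ := by ring
      have hCρ0 : 0 ≤ C * ρ k := mul_nonneg hC (hρ0 k)
      have hst2 : (‖p (k+1)‖ * ‖p (n-1)‖⁻¹) * (‖p (k+1)‖ * ‖p (n-1)‖⁻¹) ≤ M * M :=
        mul_le_mul hst hst (by positivity) (by linarith [hst, (by positivity : (0:ℝ) ≤ ‖p (k+1)‖ * ‖p (n-1)‖⁻¹)])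
      calc ‖(p (n-1))⁻¹ * (p (n-1))⁻¹ * (p (k+1) * ((R (k+1)) (x (k+1)) 1))‖
          = ‖p (n-1)‖⁻¹ * ‖p (n-1)‖⁻¹ * (‖p (k+1)‖ * ‖(R (k+1)) (x (k+1)) 1‖) := by
            rw [norm_mul, norm_mul, norm_mul, norm_inv]
        _ ≤ ‖p (n-1)‖⁻¹ * ‖p (n-1)‖⁻¹ * (‖p (k+1)‖ * ((C * ρ k) * ‖p (k+1)‖)) := by
            apply mul_le_mul_of_nonneg_left _ (by positivity)
            exact mul_le_mul_of_nonneg_left hcomp1 (norm_nonneg _)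
        _ = ((‖p (k+1)‖ * ‖p (n-1)‖⁻¹) * (‖p (k+1)‖ * ‖p (n-1)‖⁻¹)) * (C * ρ k) := by ring
        _ ≤ (M * M) * (C * ρ k) := mul_le_mul_of_nonneg_right hst2 hCρ0
        _ = M^2 * (C * ρ k) := by ring
    · rw [if_neg hc]
      simp only [norm_zero]
      positivity
  have hab : ∀ k, Tendsto (fun n => f n k) atTop (nhds 0) := by
    intro k
    have hg : Tendsto (fun n : ℕ => ((p (n-1))⁻¹ * (p (n-1))⁻¹) *
        (p (k+1) * ((R (k+1)) (x (k+1)) 1))) atTop (nhds 0) := by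
      have := (hpm1.mul hpm1).mul_const (p (k+1) * ((R (k+1)) (x (k+1)) 1))
      simpa using this
    apply Tendsto.congr' _ hg
    filter_upwards [eventually_ge_atTop (k+2)] with n hn
    simp only [hfdef]
    rw [if_pos (show k < n - 1 by omega)]
  have hbsum : Summable (fun k : ℕ => M^2 * (C * ρ k)) := (hS.mul_left C).mul_left (M^2)
  have htsum : Tendsto (fun n : ℕ => ∑' k, f n k) atTop (nhds 0) := by
    have := tendsto_tsum_of_dominated_convergence (f := f) (g := fun _ => (0:ℂ))
      (bound := fun k => M^2 * (C * ρ k)) hbsum hab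
      (Filter.Eventually.of_forall (fun n k => hfb n k))
    simpa [tsum_zero] using this
  have hx11tend : Tendsto (fun n : ℕ => ((p (n-1))⁻¹ * (p (n-1))⁻¹) * x 1 1) atTop (nhds 0) := by
    have := (hpm1.mul hpm1).mul_const (x 1 1)
    simpa using this
  have h1 : Tendsto (fun n : ℕ => (p (n-1))⁻¹ * x n 1) atTop (nhds 0) := by
    have hfull := hx11tend.add htsum
    rw [add_zero] at hfull
    apply Tendsto.congr' _ hfull
    filter_upwards [eventually_ge_atTop 1] with n hn
    obtain ⟨m, rfl⟩ : ∃ m, n = m + 1 := ⟨n - 1, by omega⟩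
    simp only [Nat.add_sub_cancel]
    have hts : ∑' k, f (m+1) k
        = ∑ k ∈ range m, ((p m)⁻¹ * (p m)⁻¹) * (p (k+1) * ((R (k+1)) (x (k+1)) 1)) := by
      rw [tsum_eq_sum (s := range m)]
      · apply Finset.sum_congr rfl
        intro k hk
        simp only [hfdef]
        rw [if_pos (show k < (m+1) - 1 by simpa using Finset.mem_range.mp hk)]
        simp only [Nat.add_sub_cancel]
      · intro k hk
        simp only [hfdef]
        rw [if_neg (show ¬ k < (m+1) - 1 by simpa using hk)]
    rw [hts]
    have cc : p m * (p m)⁻¹ = 1 := mul_inv_cancel₀ (hpne m)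
    have hx' : (p m)⁻¹ * x (m+1) 1 = (p m)⁻¹ * (p m)⁻¹ *
        (x 1 1 + ∑ k ∈ range m, p (k+1) * ((R (k+1)) (x (k+1)) 1)) := by
      rw [← hB m]
      linear_combination (-((p m)⁻¹ * x (m+1) 1)) * cc
    rw [hx', mul_add, Finset.mul_sum]
  -- assemble
  apply tendsto_of_components
  intro i
  fin_cases i
  · show Tendsto (fun n : ℕ => (p (n-1))⁻¹ * x n 0) atTop
        (nhds (P (x 1 + ∑' k : ℕ, (p (k+1))⁻¹ • (R (k+1)) (x (k+1))) 0))
    have hL : P (x 1 + ∑' k : ℕ, (p (k+1))⁻¹ • (R (k+1)) (x (k+1))) 0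
        = x 1 0 + ∑' k : ℕ, (p (k+1))⁻¹ * ((R (k+1)) (x (k+1)) 0) := by
      rw [(hP _).1]
      show x 1 0 + (∑' k : ℕ, (p (k+1))⁻¹ • (R (k+1)) (x (k+1))) 0 = _
      rw [hT0]
    rw [hL]
    exact h0
  · show Tendsto (fun n : ℕ => (p (n-1))⁻¹ * x n 1) atTop
        (nhds (P (x 1 + ∑' k : ℕ, (p (k+1))⁻¹ • (R (k+1)) (x (k+1))) 1))
    rw [(hP _).2]
    exact h1
end

section
/- Let μ₂(z) := c²z²(1+z²)e^{2iω} / (4(1−z²)(z²−e^{2iω})(1−z²e^{2iω})) with c, ω real. Then for every z on the unit circle with z ∉ {1, −1, e^{±iω}, −e^{±iω}, e^{±2iω}, −e^{±2iω}}, the value μ₂(z) is purely imaginary, i.e. Re μ₂(z) = 0. -/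
open Complex

theorem mu2_purely_imaginary_on_circle (c ω : ℝ) (z : ℂ) (hz : ‖z‖ = 1)
    (h1 : z ≠ 1) (h2 : z ≠ -1)
    (h3 : z ≠ Complex.exp (ω * I)) (h4 : z ≠ Complex.exp (-ω * I))
    (h5 : z ≠ -Complex.exp (ω * I)) (h6 : z ≠ -Complex.exp (-ω * I))
    (h7 : z ≠ Complex.exp (2 * ω * I)) (h8 : z ≠ Complex.exp (-(2 * ω) * I))
    (h9 : z ≠ -Complex.exp (2 * ω * I)) (h10 : z ≠ -Complex.exp (-(2 * ω) * I)) :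
    ((c : ℂ) ^ 2 * z ^ 2 * (1 + z ^ 2) * Complex.exp (2 * ω * I) /
      (4 * (1 - z ^ 2) * (z ^ 2 - Complex.exp (2 * ω * I)) *
        (1 - z ^ 2 * Complex.exp (2 * ω * I)))).re = 0 := by
  set E : ℂ := Complex.exp (2 * ω * I) with hE
  have hz0 : z ≠ 0 := by
    intro h; rw [h] at hz; simp at hz
  have hE0 : E ≠ 0 := Complex.exp_ne_zero _
  have hEsq : E = Complex.exp (ω * I) * Complex.exp (ω * I) := by
    rw [hE, ← Complex.exp_add]; ring_nf
  have hEinv : E⁻¹ = Complex.exp (-ω * I) * Complex.exp (-ω * I) := by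
    rw [hE, ← Complex.exp_neg, ← Complex.exp_add]; congr 1; ring
  have hd1 : (1 : ℂ) - z ^ 2 ≠ 0 := by
    intro h
    have : (1 - z) * (1 + z) = 0 := by linear_combination h
    rcases mul_eq_zero.1 this with h' | h'
    · exact h1 (by linear_combination -h')
    · exact h2 (by linear_combination h')
  have hd2 : z ^ 2 - E ≠ 0 := by
    intro h
    have : (z - Complex.exp (ω * I)) * (z + Complex.exp (ω * I)) = 0 := by
      linear_combination h + hEsq
    rcases mul_eq_zero.1 this with h' | h'
    · exact h3 (by linear_combination h')
    · exact h5 (by linear_combination h')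
  have hd3 : (1 : ℂ) - z ^ 2 * E ≠ 0 := by
    intro h
    have hz2 : z ^ 2 = E⁻¹ := by
      field_simp
      linear_combination -h
    have : (z - Complex.exp (-ω * I)) * (z + Complex.exp (-ω * I)) = 0 := by
      linear_combination hz2 + hEinv
    rcases mul_eq_zero.1 this with h' | h'
    · exact h4 (by linear_combination h')
    · exact h6 (by linear_combination h')
  set w : ℂ := (c : ℂ) ^ 2 * z ^ 2 * (1 + z ^ 2) * E /
      (4 * (1 - z ^ 2) * (z ^ 2 - E) * (1 - z ^ 2 * E)) with hw
  have hconjz : (starRingEnd ℂ) z = z⁻¹ := by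
    rw [Complex.inv_def]
    simp [Complex.normSq_eq_norm_sq, hz]
  have hconjE : (starRingEnd ℂ) E = E⁻¹ := by
    have harg : (starRingEnd ℂ) (2 * (ω : ℂ) * I) = -(2 * (ω : ℂ) * I) := by
      simp only [map_mul, Complex.conj_I, Complex.conj_ofReal, map_ofNat]; ring
    rw [hE, ← Complex.exp_conj, harg, Complex.exp_neg]
  have key : (starRingEnd ℂ) w = -w := by
    rw [hw, map_div₀]
    simp only [map_mul, map_sub, map_add, map_one, map_pow, map_ofNat,
      Complex.conj_ofReal, hconjz, hconjE]
    have hid : 4 * (1 - z⁻¹ ^ 2) * (z⁻¹ ^ 2 - E⁻¹) * (1 - z⁻¹ ^ 2 * E⁻¹) =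
        -(4 * (1 - z ^ 2) * (z ^ 2 - E) * (1 - z ^ 2 * E)) / (z ^ 6 * E ^ 2) := by
      rw [inv_eq_one_div, inv_eq_one_div]
      field_simp
      have h6 : z ^ 6 * z⁻¹ ^ 6 * (E ^ 2 * E⁻¹ ^ 2) = 1 := by
        rw [← mul_pow, ← mul_pow, mul_inv_cancel₀ hz0, mul_inv_cancel₀ hE0]; simp
      ring
    have hidA : (c : ℂ) ^ 2 * z⁻¹ ^ 2 * (1 + z⁻¹ ^ 2) * E⁻¹ =
        (c : ℂ) ^ 2 * (1 + z ^ 2) / (z ^ 4 * E) := by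
      rw [inv_eq_one_div, inv_eq_one_div]
      field_simp
      ring
    have hden : 4 * (1 - z ^ 2) * (z ^ 2 - E) * (1 - z ^ 2 * E) ≠ 0 := by
      apply mul_ne_zero (mul_ne_zero (mul_ne_zero _ hd1) hd2) hd3
      norm_num
    have hden' : 4 * (1 - z⁻¹ ^ 2) * (z⁻¹ ^ 2 - E⁻¹) * (1 - z⁻¹ ^ 2 * E⁻¹) ≠ 0 := by
      rw [hid]
      exact div_ne_zero (neg_ne_zero.2 hden)
        (mul_ne_zero (pow_ne_zero _ hz0) (pow_ne_zero _ hE0))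
    rw [hidA, hid, div_div_div_eq, ← neg_div,
      div_eq_div_iff (mul_ne_zero (mul_ne_zero (pow_ne_zero _ hz0) hE0)
        (neg_ne_zero.2 hden)) hden]
    ring
  have hsum := Complex.add_conj w
  rw [key] at hsum
  push_cast at hsum
  have h0 : (w.re : ℂ) = 0 := by linear_combination -hsum / 2
  exact_mod_cast h0
end

section
/- Rigidity of oscillating asymptotics: let z ∈ ℂ with |z| = 1 and z² ≠ 1, let 0 < γ < 1/2, let μ ∈ ℂ be purely imaginary, and let A, B ∈ ℂ. If A·z^{-n}·exp(μ·n^{1-2γ}) + B·z^{n}·exp(−μ·n^{1-2γ}) → 0 as n → ∞, then A = B = 0. -/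
open Filter

lemma rpow_succ_sub_tendsto {p : ℝ} (hp0 : 0 < p) (hp1 : p < 1) :
    Tendsto (fun n : ℕ => ((n : ℝ) + 1) ^ p - (n : ℝ) ^ p) atTop (nhds 0) := by
  have hub : Tendsto (fun n : ℕ => p * (n : ℝ) ^ (p - 1)) atTop (nhds 0) := by
    have := (tendsto_rpow_neg_atTop (by linarith : (0:ℝ) < 1 - p)).comp
      tendsto_natCast_atTop_atTop (α := ℕ)
    have h2 : Tendsto (fun n : ℕ => (n : ℝ) ^ (p - 1)) atTop (nhds 0) := by
      convert this using 2 with n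
      simp [neg_sub]
    simpa using h2.const_mul p
  apply tendsto_of_tendsto_of_tendsto_of_le_of_le' tendsto_const_nhds hub
  · filter_upwards with n
    have : (n : ℝ) ^ p ≤ ((n : ℝ) + 1) ^ p :=
      Real.rpow_le_rpow (Nat.cast_nonneg n) (by linarith) hp0.le
    linarith
  · filter_upwards [eventually_ge_atTop 1] with n hn
    have hn' : (0 : ℝ) < n := by exact_mod_cast hn
    have key : ((n : ℝ) + 1) ^ p ≤ (n : ℝ) ^ p * (1 + p * (1 / n)) := by
      have h1 : ((n : ℝ) + 1) = (n : ℝ) * (1 + 1 / n) := by field_simp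
      rw [h1, Real.mul_rpow hn'.le (by positivity)]
      refine mul_le_mul_of_nonneg_left ?_ (by positivity)
      have hs : (-1:ℝ) ≤ 1 / n := by
        have : (0:ℝ) ≤ 1 / n := by positivity
        linarith
      exact rpow_one_add_le_one_add_mul_self hs hp0.le hp1.le
    have h2 : (n : ℝ) ^ p * (1 + p * (1 / n)) = (n : ℝ) ^ p + p * (n : ℝ) ^ (p - 1) := by
      rw [Real.rpow_sub hn', Real.rpow_one]
      field_simp
    linarith [key, h2.symm.le]

theorem oscillating_asymptotics_rigidity (z : ℂ) (hz : ‖z‖ = 1)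
    (hz2 : z ^ 2 ≠ 1) (γ : ℝ) (hγ0 : 0 < γ) (hγ : γ < 1 / 2)
    (μ : ℂ) (hμ : μ.re = 0) (A B : ℂ)
    (h : Tendsto (fun n : ℕ =>
        A * z ^ (-(n : ℤ)) * Complex.exp (μ * ((n : ℝ) ^ (1 - 2 * γ) : ℝ)) +
          B * z ^ (n : ℕ) * Complex.exp (-μ * ((n : ℝ) ^ (1 - 2 * γ) : ℝ)))
      atTop (nhds 0)) :
    A = 0 ∧ B = 0 := by
  have hz0 : z ≠ 0 := by
    intro hzz; rw [hzz] at hz; simp at hz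
  have hp0 : (0:ℝ) < 1 - 2 * γ := by linarith
  have hp1 : (1:ℝ) - 2 * γ < 1 := by linarith
  set a : ℕ → ℝ := fun n => (n : ℝ) ^ (1 - 2 * γ) with ha
  have hexp1 : ∀ (c : ℂ) (x : ℝ), c.re = 0 → ‖Complex.exp (c * x)‖ = 1 := by
    intro c x hc
    rw [Complex.norm_exp]
    simp [Complex.mul_re, hc]
  set t : ℕ → ℂ := fun n => B * (z ^ 2) ^ n * Complex.exp (-(2 * μ) * a n) with ht
  have htnorm : ∀ n, ‖t n‖ = ‖B‖ := by
    intro n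
    rw [ht]
    simp only [norm_mul, norm_pow]
    rw [hexp1 (-(2*μ)) (a n) (by simp [hμ]), hz]
    simp
  have hg : Tendsto (fun n : ℕ => A + t n) atTop (nhds 0) := by
    rw [tendsto_zero_iff_norm_tendsto_zero]
    have heq : ∀ n : ℕ, ‖A + t n‖ =
        ‖A * z ^ (-(n : ℤ)) * Complex.exp (μ * ((n : ℝ) ^ (1 - 2 * γ) : ℝ)) +
          B * z ^ (n : ℕ) * Complex.exp (-μ * ((n : ℝ) ^ (1 - 2 * γ) : ℝ))‖ := by
      intro n
      have hzinv : z ^ (-(n : ℤ)) * z ^ (n : ℕ) = 1 := by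
        rw [zpow_neg, zpow_natCast]
        exact inv_mul_cancel₀ (pow_ne_zero n hz0)
      have hexpmul : Complex.exp (μ * ((n : ℝ) ^ (1 - 2 * γ) : ℝ)) *
          Complex.exp (-μ * ((n : ℝ) ^ (1 - 2 * γ) : ℝ)) = 1 := by
        rw [← Complex.exp_add,
          show μ * ((n : ℝ) ^ (1 - 2 * γ) : ℝ) + -μ * ((n : ℝ) ^ (1 - 2 * γ) : ℝ) = 0 by ring,
          Complex.exp_zero]
      have hexp2 : Complex.exp (-μ * ((n : ℝ) ^ (1 - 2 * γ) : ℝ)) *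
          Complex.exp (-μ * ((n : ℝ) ^ (1 - 2 * γ) : ℝ)) =
          Complex.exp (-(2 * μ) * a n) := by
        rw [← Complex.exp_add]
        congr 1
        simp only [ha]
        ring
      have hpow : z ^ (n : ℕ) * z ^ (n : ℕ) = (z ^ 2) ^ n := by
        rw [← pow_add, ← pow_mul, two_mul]
      have key : A + t n =
          (A * z ^ (-(n : ℤ)) * Complex.exp (μ * ((n : ℝ) ^ (1 - 2 * γ) : ℝ)) +
            B * z ^ (n : ℕ) * Complex.exp (-μ * ((n : ℝ) ^ (1 - 2 * γ) : ℝ))) *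
          (z ^ (n : ℕ) * Complex.exp (-μ * ((n : ℝ) ^ (1 - 2 * γ) : ℝ))) := by
        have expand :
            (A * z ^ (-(n : ℤ)) * Complex.exp (μ * ((n : ℝ) ^ (1 - 2 * γ) : ℝ)) +
              B * z ^ (n : ℕ) * Complex.exp (-μ * ((n : ℝ) ^ (1 - 2 * γ) : ℝ))) *
            (z ^ (n : ℕ) * Complex.exp (-μ * ((n : ℝ) ^ (1 - 2 * γ) : ℝ))) =
            A * (z ^ (-(n : ℤ)) * z ^ (n : ℕ)) *
              (Complex.exp (μ * ((n : ℝ) ^ (1 - 2 * γ) : ℝ)) *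
                Complex.exp (-μ * ((n : ℝ) ^ (1 - 2 * γ) : ℝ))) +
            B * (z ^ (n : ℕ) * z ^ (n : ℕ)) *
              (Complex.exp (-μ * ((n : ℝ) ^ (1 - 2 * γ) : ℝ)) *
                Complex.exp (-μ * ((n : ℝ) ^ (1 - 2 * γ) : ℝ))) := by ring
        rw [expand, hzinv, hexpmul, hexp2, hpow, ht]
        ring
      rw [key, norm_mul, norm_mul, norm_pow]
      have h1 : ‖z‖ = 1 := hz
      have h2 : ‖Complex.exp (-μ * ((n : ℝ) ^ (1 - 2 * γ) : ℝ))‖ = 1 :=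
        hexp1 (-μ) _ (by simp [hμ])
      rw [h1, h2]
      ring
    simp only [heq]
    simpa using h.norm
  have hta : Tendsto t atTop (nhds (-A)) := by
    have := hg.sub_const A
    simpa using this
  have hdiff : Tendsto (fun n => t (n + 1) - t n) atTop (nhds 0) := by
    have h1 : Tendsto (fun n => t (n + 1)) atTop (nhds (-A)) :=
      hta.comp (tendsto_add_atTop_nat 1)
    simpa using h1.sub hta
  have hid : ∀ n : ℕ, t (n + 1) - t n =
      t n * (z ^ 2 * Complex.exp (-(2 * μ) * ((a (n + 1) - a n : ℝ) : ℂ)) - 1) := by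
    intro n
    have hexp : Complex.exp (-(2 * μ) * ((a (n + 1) : ℝ) : ℂ)) =
        Complex.exp (-(2 * μ) * ((a n : ℝ) : ℂ)) *
          Complex.exp (-(2 * μ) * (((a (n + 1) - a n : ℝ)) : ℂ)) := by
      rw [← Complex.exp_add]
      congr 1
      push_cast
      ring
    rw [ht]
    simp only
    rw [hexp, pow_succ]
    ring
  have hnorm : ∀ n, ‖t (n + 1) - t n‖ =
      ‖B‖ * ‖z ^ 2 * Complex.exp (-(2 * μ) * ((a (n + 1) - a n : ℝ) : ℂ)) - 1‖ := by
    intro n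
    rw [hid n, norm_mul]
    congr 1
    exact htnorm n
  have hareal : Tendsto (fun n : ℕ => a (n + 1) - a n) atTop (nhds 0) := by
    have := rpow_succ_sub_tendsto hp0 hp1
    convert this using 2 with n
    simp [ha]
  have hfac : Tendsto
      (fun n => z ^ 2 * Complex.exp (-(2 * μ) * ((a (n + 1) - a n : ℝ) : ℂ)) - 1)
      atTop (nhds (z ^ 2 - 1)) := by
    have h1 : Tendsto (fun n : ℕ => ((a (n + 1) - a n : ℝ) : ℂ)) atTop (nhds 0) := by
      rw [show ((0:ℂ)) = ((0:ℝ):ℂ) by simp]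
      exact (Complex.continuous_ofReal.tendsto 0).comp hareal
    have h3 : Tendsto (fun n : ℕ => -(2 * μ) * ((a (n + 1) - a n : ℝ) : ℂ)) atTop
        (nhds 0) := by
      simpa using h1.const_mul (-(2 * μ))
    have h2 : Tendsto (fun n : ℕ =>
        Complex.exp (-(2 * μ) * ((a (n + 1) - a n : ℝ) : ℂ))) atTop (nhds 1) := by
      have := (Complex.continuous_exp.tendsto 0).comp h3
      simpa [Function.comp_def] using this
    have := (h2.const_mul (z ^ 2)).sub_const 1
    simpa [mul_comm] using this
  have hlim1 : Tendsto (fun n => ‖t (n + 1) - t n‖) atTop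
      (nhds (‖B‖ * ‖z ^ 2 - 1‖)) := by
    simp only [hnorm]
    exact (hfac.norm).const_mul ‖B‖
  have hlim2 : Tendsto (fun n => ‖t (n + 1) - t n‖) atTop (nhds 0) := by
    simpa using hdiff.norm
  have hBzero : ‖B‖ * ‖z ^ 2 - 1‖ = 0 := tendsto_nhds_unique hlim1 hlim2
  have hB : B = 0 := by
    rcases mul_eq_zero.mp hBzero with hB | hc
    · exact norm_eq_zero.mp hB
    · exfalso; apply hz2; rwa [norm_eq_zero, sub_eq_zero] at hc
  refine ⟨?_, hB⟩
  have ht0 : ∀ n, t n = 0 := by intro n; rw [ht]; simp [hB]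
  have htz : Tendsto t atTop (nhds 0) := by
    simp only [funext ht0]; exact tendsto_const_nhds
  have := tendsto_nhds_unique hta htz
  simpa [neg_eq_zero] using this.symm
end

section
/- Let z ∈ ℂ with |z| = 1, z² ≠ 1, let 0 < γ < 1/2 and μ ∈ ℂ with Re μ = 0. If there exist Φ, Ψ ∈ ℂ such that the real sequence p_n satisfies p_n = Φ·z^{-n}·exp(μ n^{1-2γ}/(1-2γ)) + Ψ·z^{n}·exp(−μ n^{1-2γ}/(1-2γ)) + o(1) as n → ∞, then Ψ equals the complex conjugate of Φ. -/
open Filter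

theorem tilde_phi_eq_conj_phi (z : ℂ) (hz : ‖z‖ = 1) (hz2 : z ^ 2 ≠ 1)
    (γ : ℝ) (hγ0 : 0 < γ) (hγ : γ < 1 / 2)
    (μ : ℂ) (hμ : μ.re = 0) (p : ℕ → ℝ) (Φ Ψ : ℂ)
    (h : Tendsto (fun n : ℕ =>
        (p n : ℂ) -
          (Φ * z ^ (-(n : ℤ)) * Complex.exp (μ * ((n : ℝ) ^ (1 - 2 * γ) / (1 - 2 * γ) : ℝ)) +
            Ψ * z ^ (n : ℕ) * Complex.exp (-μ * ((n : ℝ) ^ (1 - 2 * γ) / (1 - 2 * γ) : ℝ))))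
      atTop (nhds 0)) :
    Ψ = starRingEnd ℂ Φ := by
  set β : ℝ := 1 - 2 * γ with hβdef
  have hβ0 : 0 < β := by rw [hβdef]; linarith
  have hβ1 : β < 1 := by rw [hβdef]; linarith
  set a : ℕ → ℝ := fun n => (n : ℝ) ^ β / β with ha
  have hz0 : z ≠ 0 := by
    intro h0; rw [h0] at hz; simp at hz
  have hconjz : (starRingEnd ℂ) z = z⁻¹ := (Complex.inv_eq_conj hz).symm
  have hconjμ : (starRingEnd ℂ) μ = -μ := by
    apply Complex.ext <;> simp [hμ]
  set A : ℂ := Ψ - (starRingEnd ℂ) Φ with hAdef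
  suffices hA0 : A = 0 by
    have := sub_eq_zero.mp hA0
    exact this
  -- conjugated hypothesis
  have hconj : Tendsto (fun n : ℕ => (starRingEnd ℂ)
      ((p n : ℂ) -
          (Φ * z ^ (-(n : ℤ)) * Complex.exp (μ * ((n : ℝ) ^ (1 - 2 * γ) / (1 - 2 * γ) : ℝ)) +
            Ψ * z ^ (n : ℕ) * Complex.exp (-μ * ((n : ℝ) ^ (1 - 2 * γ) / (1 - 2 * γ) : ℝ)))))
      atTop (nhds 0) := by
    have hc0 : Tendsto (starRingEnd ℂ) (nhds 0) (nhds 0) := by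
      simpa using (Complex.continuous_conj.tendsto 0)
    exact hc0.comp h
  set E : ℕ → ℂ := fun n => Complex.exp (μ * (a n : ℂ)) with hE
  have hE0 : ∀ n, E n ≠ 0 := fun n => Complex.exp_ne_zero _
  have hzn0 : ∀ n : ℕ, z ^ n ≠ 0 := fun n => pow_ne_zero _ hz0
  -- step 1 : g → 0
  set g : ℕ → ℂ := fun n => A * z ^ n * (E n)⁻¹ - (starRingEnd ℂ) A * (z ^ n)⁻¹ * E n with hg
  have hgt : Tendsto g atTop (nhds 0) := by
    have hsub := hconj.sub h
    rw [sub_zero] at hsub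
    refine hsub.congr fun n => ?_
    have e1 : z ^ (-(n : ℤ)) = (z ^ n)⁻¹ := by rw [zpow_neg, zpow_natCast]
    have e2 : (starRingEnd ℂ) (z ^ (-(n : ℤ))) = z ^ n := by
      rw [map_zpow₀, hconjz, inv_zpow, ← zpow_neg, neg_neg, zpow_natCast]
    have e4 : Complex.exp (-μ * ((a n : ℝ) : ℂ)) = (E n)⁻¹ := by
      rw [neg_mul, Complex.exp_neg]
    have e5 : (starRingEnd ℂ) (Complex.exp (μ * ((a n : ℝ) : ℂ))) = (E n)⁻¹ := by
      rw [← Complex.exp_conj, map_mul, Complex.conj_ofReal, hconjμ, neg_mul, Complex.exp_neg]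
    have e6 : (starRingEnd ℂ) (Complex.exp (-μ * ((a n : ℝ) : ℂ))) = E n := by
      rw [← Complex.exp_conj, map_mul, map_neg, Complex.conj_ofReal, hconjμ, neg_neg]
    have e7 : (starRingEnd ℂ) (z ^ n) = (z ^ n)⁻¹ := by
      rw [map_pow, hconjz, inv_pow]
    have t1 : (starRingEnd ℂ) (Φ * z ^ (-(n : ℤ)) * Complex.exp (μ * ((a n : ℝ) : ℂ))) =
        (starRingEnd ℂ) Φ * z ^ n * (E n)⁻¹ := by
      rw [map_mul, map_mul, e2, e5]
    have t2 : (starRingEnd ℂ) (Ψ * z ^ n * Complex.exp (-μ * ((a n : ℝ) : ℂ))) =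
        (starRingEnd ℂ) Ψ * (z ^ n)⁻¹ * E n := by
      rw [map_mul, map_mul, e7, e6]
    show (starRingEnd ℂ)
        ((p n : ℂ) - (Φ * z ^ (-(n : ℤ)) * Complex.exp (μ * ((a n : ℝ) : ℂ)) +
            Ψ * z ^ n * Complex.exp (-μ * ((a n : ℝ) : ℂ)))) -
        ((p n : ℂ) - (Φ * z ^ (-(n : ℤ)) * Complex.exp (μ * ((a n : ℝ) : ℂ)) +
            Ψ * z ^ n * Complex.exp (-μ * ((a n : ℝ) : ℂ)))) = g n
    rw [map_sub, map_add, Complex.conj_ofReal, t1, t2, e1, e4]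
    show _ = A * z ^ n * (E n)⁻¹ - (starRingEnd ℂ) A * (z ^ n)⁻¹ * E n
    show _ - ((p n : ℂ) - (Φ * (z ^ n)⁻¹ * E n + Ψ * z ^ n * (E n)⁻¹)) = _
    simp only [hAdef, map_sub, Complex.conj_conj]
    ring
  -- step 2 : c → 0, where c n = g n * (z^n * E n)
  set c : ℕ → ℂ := fun n => A * (z ^ n) ^ 2 - (starRingEnd ℂ) A * (E n) ^ 2 with hc
  have hct : Tendsto c atTop (nhds 0) := by
    rw [tendsto_zero_iff_norm_tendsto_zero] at hgt ⊢
    refine hgt.congr fun n => ?_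
    have hceq : c n = g n * (z ^ n * E n) := by
      have hx : (E n)⁻¹ * E n = 1 := inv_mul_cancel₀ (hE0 n)
      have hy : (z ^ n)⁻¹ * z ^ n = 1 := inv_mul_cancel₀ (hzn0 n)
      show A * (z ^ n) ^ 2 - (starRingEnd ℂ) A * (E n) ^ 2 =
        (A * z ^ n * (E n)⁻¹ - (starRingEnd ℂ) A * (z ^ n)⁻¹ * E n) * (z ^ n * E n)
      calc A * (z ^ n) ^ 2 - (starRingEnd ℂ) A * (E n) ^ 2
          = A * (z ^ n) ^ 2 * ((E n)⁻¹ * E n) -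
              (starRingEnd ℂ) A * (E n) ^ 2 * ((z ^ n)⁻¹ * z ^ n) := by rw [hx, hy]; ring
        _ = _ := by ring
    have hzabs : ‖z ^ n‖ = 1 := by
      rw [norm_pow, hz, one_pow]
    have hEabs : ‖E n‖ = 1 := by
      rw [hE, Complex.norm_exp]
      simp [Complex.mul_re, hμ]
    rw [hceq, norm_mul, norm_mul, hzabs, hEabs]
    ring
  -- step 3 : v → 1
  set v : ℕ → ℂ := fun n => Complex.exp (2 * μ * ((a (n + 1) - a n : ℝ) : ℂ)) with hv
  have hd : Tendsto (fun n : ℕ => a (n + 1) - a n) atTop (nhds 0) := by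
    have hupper : Tendsto (fun n : ℕ => (n : ℝ) ^ (β - 1)) atTop (nhds 0) := by
      have h1 : (0:ℝ) < 1 - β := by linarith
      have := (tendsto_rpow_neg_atTop h1).comp tendsto_natCast_atTop_atTop (α := ℕ)
      refine this.congr fun n => ?_
      simp only [Function.comp_apply]
      norm_num
    refine tendsto_of_tendsto_of_tendsto_of_le_of_le' tendsto_const_nhds hupper ?_ ?_
    · filter_upwards with n
      have : (n : ℝ) ^ β ≤ ((n : ℝ) + 1) ^ β := by
        apply Real.rpow_le_rpow (Nat.cast_nonneg n) (by linarith) hβ0.le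
      simp only [ha]
      rw [div_sub_div_same]
      push_cast
      exact div_nonneg (by linarith) hβ0.le
    · filter_upwards [eventually_ge_atTop 1] with n hn
      have hn0 : (0:ℝ) < (n : ℝ) := by exact_mod_cast hn
      have key : ((n : ℝ) + 1) ^ β ≤ (n : ℝ) ^ β + β * (n : ℝ) ^ (β - 1) := by
        have h1 : ((n : ℝ) + 1) ^ β = (n : ℝ) ^ β * (1 + 1 / n) ^ β := by
          rw [← Real.mul_rpow hn0.le (by positivity)]
          congr 1
          field_simp
        have h2 : (1 + 1 / (n:ℝ)) ^ β ≤ 1 + β * (1 / n) := by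
          apply rpow_one_add_le_one_add_mul_self
            (le_trans (by norm_num : (-1:ℝ) ≤ 0) (by positivity)) hβ0.le hβ1.le
        have h3 : (n : ℝ) ^ β * (1 + β * (1 / n)) = (n:ℝ) ^ β + β * (n:ℝ) ^ (β - 1) := by
          have hrp : (n : ℝ) ^ (β - 1) = (n : ℝ) ^ β / n := by
            rw [Real.rpow_sub hn0, Real.rpow_one]
          rw [hrp]
          generalize (n : ℝ) ^ β = X
          field_simp
        calc ((n : ℝ) + 1) ^ β = (n : ℝ) ^ β * (1 + 1 / n) ^ β := h1
          _ ≤ (n : ℝ) ^ β * (1 + β * (1 / n)) := by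
              apply mul_le_mul_of_nonneg_left h2 (by positivity)
          _ = (n:ℝ) ^ β + β * (n:ℝ) ^ (β - 1) := h3
      simp only [ha]
      rw [div_sub_div_same, div_le_iff₀ hβ0]
      push_cast
      nlinarith [key]
  have hvt : Tendsto v atTop (nhds 1) := by
    have h1 : Tendsto (fun n : ℕ => 2 * μ * ((a (n + 1) - a n : ℝ) : ℂ)) atTop (nhds 0) := by
      have := ((Complex.continuous_ofReal.tendsto 0).comp hd).const_mul (2 * μ)
      simpa using this
    have h2 := (Complex.continuous_exp.tendsto 0).comp h1
    rw [Complex.exp_zero] at h2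
    exact h2
  -- step 4 : shift
  have hc1 : Tendsto (fun n => c (n + 1)) atTop (nhds 0) := hct.comp (tendsto_add_atTop_nat 1)
  have hw : Tendsto (fun n => c (n + 1) - c n * v n) atTop (nhds 0) := by
    have := hc1.sub (hct.mul hvt)
    simpa using this
  have hshift : ∀ n : ℕ, c (n + 1) - c n * v n = A * (z ^ n) ^ 2 * (z ^ 2 - v n) := by
    intro n
    have hEv : (E n) ^ 2 * v n = (E (n + 1)) ^ 2 := by
      simp only [hE, hv, ← Complex.exp_nat_mul, ← Complex.exp_add]
      congr 1
      push_cast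
      ring
    simp only [hc]
    rw [← hEv]
    ring
  have hfin : Tendsto (fun n : ℕ => A * (z ^ n) ^ 2 * (z ^ 2 - 1)) atTop (nhds 0) := by
    have h2 : Tendsto (fun n : ℕ => A * (z ^ n) ^ 2 * (v n - 1)) atTop (nhds 0) := by
      rw [tendsto_zero_iff_norm_tendsto_zero]
      have h3 : Tendsto (fun n : ℕ => ‖A‖ * ‖v n - 1‖) atTop (nhds 0) := by
        have h4 : Tendsto (fun n : ℕ => v n - 1) atTop (nhds 0) := by
          simpa using hvt.sub (tendsto_const_nhds (x := (1:ℂ)))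
        simpa using (h4.norm.const_mul ‖A‖)
      refine h3.congr fun n => ?_
      rw [norm_mul, norm_mul, norm_pow, norm_pow, hz]
      ring
    have := hw.add h2
    rw [add_zero] at this
    refine this.congr fun n => ?_
    rw [hshift n]
    ring
  have hnorm : Tendsto (fun _ : ℕ => ‖A‖ * ‖z ^ 2 - 1‖) atTop (nhds 0) := by
    rw [tendsto_zero_iff_norm_tendsto_zero] at hfin
    refine hfin.congr fun n => ?_
    rw [norm_mul, norm_mul, norm_pow, norm_pow, hz]
    ring
  have h0 : ‖A‖ * ‖z ^ 2 - 1‖ = 0 := (tendsto_nhds_unique hnorm tendsto_const_nhds).symm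
  have hz21 : ‖z ^ 2 - 1‖ ≠ 0 := by
    simp [sub_eq_zero, hz2]
  have : ‖A‖ = 0 := by
    rcases mul_eq_zero.mp h0 with h' | h'
    · exact h'
    · exact absurd h' hz21
  exact norm_eq_zero.mp this
end

section
/- Lower bound on partial products: let z ∈ ℂ with 0 < |z| ≤ 1, let 0 < γ < 1/2, and let c₁ ≥ 0 satisfy |Re μ| ≤ c₁·(1 − |z|) for a fixed μ ∈ ℂ. Define c₂ := sup_{x ≥ 0} ((c₁/(1-2γ))·x^{1-2γ} − x), which is finite. Then for all m ≥ n ≥ 1, |z|^{-(m-n)}·exp((Re μ/(1-2γ))·((m+1)^{1-2γ} − (n+1)^{1-2γ})) ≥ exp(−c₂). -/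
open scoped NNReal

private lemma rpow_add_le_add_rpow_real {x y p : ℝ} (hx : 0 ≤ x) (hy : 0 ≤ y)
    (hp0 : 0 ≤ p) (hp1 : p ≤ 1) : (x + y) ^ p ≤ x ^ p + y ^ p := by
  have h := NNReal.rpow_add_le_add_rpow x.toNNReal y.toNNReal hp0 hp1
  have h2 := NNReal.coe_le_coe.mpr h
  push_cast [Real.coe_toNNReal x hx, Real.coe_toNNReal y hy] at h2
  exact h2

private lemma bdd_aux {a α : ℝ} (ha : 0 ≤ a) (hα0 : 0 < α) (hα1 : α < 1) :
    ∀ x ∈ Set.Ici (0:ℝ), a * x ^ α - x ≤ a * ((a + 1) ^ ((1:ℝ)/(1-α))) ^ α := by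
  intro x hx
  set X : ℝ := (a + 1) ^ ((1:ℝ)/(1-α)) with hX
  have hX0 : 0 < X := Real.rpow_pos_of_pos (by linarith) _
  have hXα : X ^ (1 - α) = a + 1 := by
    have he : (1:ℝ)/(1-α) * (1-α) = 1 := one_div_mul_cancel (by linarith : (1:ℝ) - α ≠ 0)
    rw [hX, ← Real.rpow_mul (by linarith : (0:ℝ) ≤ a + 1), he, Real.rpow_one]
  rcases le_or_gt x X with h | h
  · have hxα : x ^ α ≤ X ^ α := Real.rpow_le_rpow hx h hα0.le
    have : a * x ^ α ≤ a * X ^ α := mul_le_mul_of_nonneg_left hxα ha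
    have hx' : (0:ℝ) ≤ x := hx
    linarith
  · have hx0 : 0 < x := hX0.trans h
    have h1 : a ≤ x ^ (1 - α) := by
      have : X ^ (1-α) ≤ x ^ (1-α) := Real.rpow_le_rpow hX0.le h.le (by linarith)
      rw [hXα] at this; linarith
    have h2 : a * x ^ α ≤ x := by
      calc a * x ^ α ≤ x ^ (1-α) * x ^ α :=
            mul_le_mul_of_nonneg_right h1 (Real.rpow_nonneg hx0.le _)
        _ = x := by rw [← Real.rpow_add hx0]; norm_num
    have h3 : 0 ≤ a * X ^ α := mul_nonneg ha (Real.rpow_nonneg hX0.le _)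
    linarith

theorem lower_bound_partial_products (z : ℂ) (hz0 : 0 < ‖z‖)
    (hz1 : ‖z‖ ≤ 1) (γ : ℝ) (hγ0 : 0 < γ) (hγ : γ < 1 / 2)
    (μ : ℂ) (c₁ : ℝ) (hc₁ : 0 ≤ c₁) (hre : |μ.re| ≤ c₁ * (1 - ‖z‖)) :
    BddAbove ((fun x : ℝ => c₁ / (1 - 2 * γ) * x ^ (1 - 2 * γ) - x) '' Set.Ici 0) ∧
      ∀ m n : ℕ, 1 ≤ n → n ≤ m →
        Real.exp (-sSup ((fun x : ℝ => c₁ / (1 - 2 * γ) * x ^ (1 - 2 * γ) - x) '' Set.Ici 0)) ≤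
          (‖z‖ ^ (m - n))⁻¹ *
            Real.exp ((μ.re / (1 - 2 * γ)) *
              (((m : ℝ) + 1) ^ (1 - 2 * γ) - ((n : ℝ) + 1) ^ (1 - 2 * γ))) := by
  set α : ℝ := 1 - 2 * γ with hαdef
  have hα0 : 0 < α := by rw [hαdef]; linarith
  have hα1 : α < 1 := by rw [hαdef]; linarith
  set a : ℝ := c₁ / α with hadef
  have ha : 0 ≤ a := div_nonneg hc₁ hα0.le
  have hbdd : BddAbove ((fun x : ℝ => a * x ^ α - x) '' Set.Ici 0) := by
    refine ⟨a * ((a + 1) ^ ((1:ℝ)/(1-α))) ^ α, ?_⟩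
    rintro _ ⟨x, hx, rfl⟩
    exact bdd_aux ha hα0 hα1 x hx
  refine ⟨hbdd, ?_⟩
  intro m n hn hnm
  set r : ℝ := ‖z‖ with hrdef
  set c₂ : ℝ := sSup ((fun x : ℝ => a * x ^ α - x) '' Set.Ici 0) with hc₂def
  have hc₂ : ∀ x : ℝ, 0 ≤ x → a * x ^ α - x ≤ c₂ :=
    fun x hx => le_csSup hbdd ⟨x, hx, rfl⟩
  set k : ℕ := m - n with hkdef
  have hkcast : (k : ℝ) = (m : ℝ) - (n : ℝ) := by
    rw [hkdef, Nat.cast_sub hnm]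
  have h1r : 0 ≤ 1 - r := by linarith
  set A : ℝ := ((m : ℝ) + 1) ^ α with hAdef
  set B : ℝ := ((n : ℝ) + 1) ^ α with hBdef
  have hn0 : (0:ℝ) ≤ (n:ℝ) + 1 := by positivity
  have hmn : (n:ℝ) + 1 ≤ (m:ℝ) + 1 := by
    have : (n:ℝ) ≤ (m:ℝ) := Nat.cast_le.mpr hnm
    linarith
  have hAB0 : 0 ≤ A - B := by
    have : B ≤ A := Real.rpow_le_rpow hn0 hmn hα0.le
    linarith
  have hkα : (0:ℝ) ≤ (k:ℝ) ^ α := Real.rpow_nonneg (Nat.cast_nonneg k) α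
  have hABk : A - B ≤ (k : ℝ) ^ α := by
    have h := rpow_add_le_add_rpow_real (x := (k:ℝ)) (y := (n:ℝ)+1)
      (Nat.cast_nonneg k) hn0 hα0.le hα1.le
    have he : (k : ℝ) + ((n:ℝ) + 1) = (m : ℝ) + 1 := by rw [hkcast]; ring
    rw [he] at h
    rw [hAdef, hBdef]; linarith
  have hrk : (0:ℝ) < r ^ k := pow_pos hz0 k
  have hrexp : r ^ k ≤ Real.exp ((k:ℝ) * (r - 1)) := by
    calc r ^ k ≤ (Real.exp (r - 1)) ^ k :=
          pow_le_pow_left₀ hz0.le (by linarith [Real.add_one_le_exp (r - 1)]) k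
      _ = Real.exp ((k:ℝ) * (r - 1)) := by rw [← Real.exp_nat_mul]
  have hinv : Real.exp ((k:ℝ) * (1 - r)) ≤ (r ^ k)⁻¹ := by
    rw [le_inv_comm₀ (Real.exp_pos _) hrk]
    calc r ^ k ≤ Real.exp ((k:ℝ) * (r - 1)) := hrexp
      _ = (Real.exp ((k:ℝ) * (1 - r)))⁻¹ := by
          rw [← Real.exp_neg]; ring_nf
  -- bound on the μ.re term
  have hμ : -(c₁ * (1 - r)) ≤ μ.re := by
    have h := abs_le.mp hre
    linarith [h.1]
  have hs1 : -(c₁ * (1 - r) / α) ≤ μ.re / α := by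
    rw [← neg_div]
    gcongr
  have hD : -(c₁ * (1 - r) / α * ((k:ℝ) ^ α)) ≤ (μ.re / α) * (A - B) := by
    calc -(c₁ * (1 - r) / α * ((k:ℝ) ^ α)) = -(c₁ * (1 - r) / α) * ((k:ℝ) ^ α) := by ring
      _ ≤ -(c₁ * (1 - r) / α) * (A - B) := by
          apply mul_le_mul_of_nonpos_left hABk
          have : 0 ≤ c₁ * (1 - r) / α := div_nonneg (mul_nonneg hc₁ h1r) hα0.le
          linarith
      _ ≤ (μ.re / α) * (A - B) := mul_le_mul_of_nonneg_right hs1 hAB0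
  -- key bound via c₂
  have hmono : (1 - r) ≤ (1 - r) ^ α := by
    have h := Real.rpow_le_rpow_of_exponent_ge' (x := 1 - r) (y := 1) (z := α)
      h1r (by linarith [hz0]) hα0.le hα1.le
    rwa [Real.rpow_one] at h
  have hpow : ((1 - r) * (k:ℝ)) ^ α = (1 - r) ^ α * (k:ℝ) ^ α :=
    Real.mul_rpow h1r (Nat.cast_nonneg k)
  have h5 : c₁ * (1 - r) / α * ((k:ℝ) ^ α) ≤ a * ((1 - r) * (k:ℝ)) ^ α := by
    calc c₁ * (1 - r) / α * ((k:ℝ) ^ α) = a * (1 - r) * ((k:ℝ) ^ α) := by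
          rw [hadef]; ring
      _ ≤ a * (1 - r) ^ α * ((k:ℝ) ^ α) :=
          mul_le_mul_of_nonneg_right (mul_le_mul_of_nonneg_left hmono ha) hkα
      _ = a * ((1 - r) ^ α * (k:ℝ) ^ α) := by ring
      _ = a * ((1 - r) * (k:ℝ)) ^ α := by rw [hpow]
  have hx := hc₂ ((1 - r) * (k:ℝ)) (mul_nonneg h1r (Nat.cast_nonneg k))
  have hcomm : (1 - r) * (k:ℝ) = (k:ℝ) * (1 - r) := mul_comm _ _
  have hkey : c₁ * (1 - r) / α * ((k:ℝ) ^ α) - (k:ℝ) * (1 - r) ≤ c₂ := by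
    rw [← hcomm]; linarith
  have hsum : -c₂ ≤ (k:ℝ) * (1 - r) + (μ.re / α) * (A - B) := by linarith
  calc Real.exp (-c₂) ≤ Real.exp ((k:ℝ) * (1 - r) + (μ.re / α) * (A - B)) :=
        Real.exp_le_exp.mpr hsum
    _ = Real.exp ((k:ℝ) * (1 - r)) * Real.exp ((μ.re / α) * (A - B)) := Real.exp_add _ _
    _ ≤ (r ^ k)⁻¹ * Real.exp ((μ.re / α) * (A - B)) :=
        mul_le_mul_of_nonneg_right hinv (Real.exp_pos _).le
end

section
/- Jost-function Wronskian identity: let z ∈ ℂ with |z| = 1 and z² ≠ 1, let 0 < γ < 1/2 and μ ∈ ℂ with Re μ = 0, and let F, F₁ ∈ ℂ. Suppose real sequences P_n, Q_n satisfy P_n = (zF/(1−z²))z^{-n}e^{μ n^{1-2γ}/(1-2γ)} + (z·conj(F)/(z²−1))z^{n}e^{−μ n^{1-2γ}/(1-2γ)} + o(1) and Q_n = (zF₁/(1−z²))z^{-n}e^{μ n^{1-2γ}/(1-2γ)} + (z·conj(F₁)/(z²−1))z^{n}e^{−μ n^{1-2γ}/(1-2γ)} + o(1) as n → ∞, and that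 P_n·Q_{n+1} − P_{n+1}·Q_n = 1 for all n. Then F·conj(F₁) − conj(F)·F₁ = 1/z − z. -/
open Filter

noncomputable def jostS (z a b μ : ℂ) (α : ℝ) : ℕ → ℂ := fun n =>
  a * z ^ (-(n : ℤ)) * Complex.exp (μ * ((n : ℝ) ^ α / α : ℝ)) +
    b * z ^ (n : ℕ) * Complex.exp (-μ * ((n : ℝ) ^ α / α : ℝ))

noncomputable def jostRho (μ : ℂ) (α : ℝ) : ℕ → ℂ := fun n =>
  Complex.exp (μ * ((((n : ℕ) + 1 : ℝ) ^ α / α - (n : ℝ) ^ α / α : ℝ) : ℂ))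

lemma aux_diff_tendsto {α : ℝ} (hα0 : 0 < α) (hα1 : α < 1) :
    Tendsto (fun n : ℕ => ((n : ℝ) + 1) ^ α - (n : ℝ) ^ α) atTop (nhds 0) := by
  have h1 : Tendsto (fun n : ℕ => α * (n : ℝ) ^ (α - 1)) atTop (nhds 0) := by
    have h := ((tendsto_rpow_neg_atTop (y := 1 - α) (by linarith)).comp
      tendsto_natCast_atTop_atTop).const_mul α
    simpa [neg_sub, Function.comp] using h
  refine squeeze_zero' ?_ ?_ h1
  · filter_upwards [eventually_ge_atTop 1] with n hn
    exact sub_nonneg.mpr (Real.rpow_le_rpow (by positivity) (by linarith) hα0.le)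
  · filter_upwards [eventually_ge_atTop 1] with n hn
    have hn0 : (0 : ℝ) < n := by exact_mod_cast hn
    have hber : (1 + 1 / (n : ℝ)) ^ α ≤ 1 + α * (1 / (n : ℝ)) :=
      rpow_one_add_le_one_add_mul_self
        (le_trans (by norm_num) (by positivity : (0:ℝ) ≤ 1 / (n:ℝ))) hα0.le hα1.le
    have hsplit : ((n : ℝ) + 1) ^ α = (n : ℝ) ^ α * (1 + 1 / (n : ℝ)) ^ α := by
      rw [← Real.mul_rpow hn0.le (by positivity)]
      congr 1
      field_simp
    have hpos : (0 : ℝ) ≤ (n : ℝ) ^ α := Real.rpow_nonneg hn0.le α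
    calc ((n : ℝ) + 1) ^ α - (n : ℝ) ^ α
        ≤ (n : ℝ) ^ α * (1 + α * (1 / (n : ℝ))) - (n : ℝ) ^ α := by
          rw [hsplit]; nlinarith
      _ = α * ((n : ℝ) ^ α / (n : ℝ) ^ (1 : ℝ)) := by rw [Real.rpow_one]; ring
      _ = α * (n : ℝ) ^ (α - 1) := by rw [← Real.rpow_sub hn0]

lemma jostRho_tendsto (μ : ℂ) {α : ℝ} (hα0 : 0 < α) (hα1 : α < 1) :
    Tendsto (jostRho μ α) atTop (nhds 1) := by
  have h0 : Tendsto (fun n : ℕ => (((n : ℕ) + 1 : ℝ) ^ α / α - (n : ℝ) ^ α / α)) atTop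
      (nhds 0) := by
    have := (aux_diff_tendsto hα0 hα1).div_const α
    simpa [sub_div] using this
  have h1 : Tendsto (fun n : ℕ =>
      μ * ((((n : ℕ) + 1 : ℝ) ^ α / α - (n : ℝ) ^ α / α : ℝ) : ℂ)) atTop (nhds 0) := by
    have h2 := ((Complex.continuous_ofReal.tendsto 0).comp h0).const_mul μ
    simpa using h2
  have h3 := (Complex.continuous_exp.tendsto 0).comp h1
  rw [Complex.exp_zero] at h3
  exact h3

lemma jostS_norm_le (z a b μ : ℂ) (α : ℝ) (hz : ‖z‖ = 1) (hμ : μ.re = 0) (n : ℕ) :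
    ‖jostS z a b μ α n‖ ≤ ‖a‖ + ‖b‖ := by
  have hexp_norm : ∀ (w : ℂ) (t : ℝ), w.re = 0 → ‖Complex.exp (w * t)‖ = 1 := by
    intro w t hw
    rw [Complex.norm_exp]
    simp [Complex.mul_re, hw]
  refine (norm_add_le _ _).trans ?_
  have h1 : ‖z ^ (-(n : ℤ))‖ = 1 := by rw [norm_zpow, hz, one_zpow]
  have h2 : ‖z ^ (n : ℕ)‖ = 1 := by rw [norm_pow, hz, one_pow]
  rw [norm_mul, norm_mul, norm_mul, norm_mul, h1, h2,
    hexp_norm μ _ hμ, hexp_norm (-μ) _ (by simp [hμ])]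
  simp

lemma jostS_wronskian (z a b a₁ b₁ μ : ℂ) (α : ℝ) (hz0 : z ≠ 0) (n : ℕ) :
    jostS z a b μ α n * jostS z a₁ b₁ μ α (n + 1) -
        jostS z a b μ α (n + 1) * jostS z a₁ b₁ μ α n =
      (a * b₁ - b * a₁) * (z * (jostRho μ α n)⁻¹ - z⁻¹ * jostRho μ α n) := by
  have hρ : jostRho μ α n = Complex.exp (μ * (((n + 1 : ℕ) : ℝ) ^ α / α : ℝ)) /
      Complex.exp (μ * ((n : ℝ) ^ α / α : ℝ)) := by
    rw [jostRho, ← Complex.exp_sub]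
    congr 1
    push_cast
    ring
  rw [hρ]
  simp only [jostS, neg_mul, Complex.exp_neg]
  rw [show ((n + 1 : ℕ) : ℤ) = (n : ℤ) + 1 by push_cast; ring]
  rw [zpow_neg, zpow_neg, zpow_natCast, zpow_add₀ hz0, zpow_natCast, zpow_one, pow_succ]
  have hw : z ^ n ≠ 0 := pow_ne_zero _ hz0
  set u := Complex.exp (μ * ((n : ℝ) ^ α / α : ℝ)) with hu'
  set v := Complex.exp (μ * (((n + 1 : ℕ) : ℝ) ^ α / α : ℝ)) with hv'
  have hu : u ≠ 0 := Complex.exp_ne_zero _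
  have hv : v ≠ 0 := Complex.exp_ne_zero _
  set w := z ^ n with hw'
  clear_value u v w
  clear hu' hv' hw'
  have hw1 : w * w⁻¹ = 1 := mul_inv_cancel₀ hw
  rw [inv_div]
  linear_combination ((a * b₁ - b * a₁) * (u * v⁻¹ * z - u⁻¹ * v * z⁻¹)) * hw1

lemma aux_mul_tendsto_zero {f g : ℕ → ℂ} {M : ℝ} (hf : ∀ n, ‖f n‖ ≤ M)
    (hg : Tendsto g atTop (nhds 0)) : Tendsto (fun n => f n * g n) atTop (nhds 0) := by
  rw [tendsto_zero_iff_norm_tendsto_zero] at hg ⊢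
  refine squeeze_zero (fun n => norm_nonneg _) (fun n => ?_) (by simpa using hg.const_mul M)
  rw [norm_mul]
  exact mul_le_mul_of_nonneg_right (hf n) (norm_nonneg _)

theorem jost_wronskian_identity (z : ℂ) (hz : ‖z‖ = 1) (hz2 : z ^ 2 ≠ 1)
    (γ : ℝ) (hγ0 : 0 < γ) (hγ : γ < 1 / 2) (μ : ℂ) (hμ : μ.re = 0)
    (F F₁ : ℂ) (P Q : ℕ → ℝ)
    (hP : Tendsto (fun n : ℕ =>
        (P n : ℂ) -
          (z * F / (1 - z ^ 2) * z ^ (-(n : ℤ)) *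
              Complex.exp (μ * ((n : ℝ) ^ (1 - 2 * γ) / (1 - 2 * γ) : ℝ)) +
            z * starRingEnd ℂ F / (z ^ 2 - 1) * z ^ (n : ℕ) *
              Complex.exp (-μ * ((n : ℝ) ^ (1 - 2 * γ) / (1 - 2 * γ) : ℝ))))
      atTop (nhds 0))
    (hQ : Tendsto (fun n : ℕ =>
        (Q n : ℂ) -
          (z * F₁ / (1 - z ^ 2) * z ^ (-(n : ℤ)) *
              Complex.exp (μ * ((n : ℝ) ^ (1 - 2 * γ) / (1 - 2 * γ) : ℝ)) +
            z * starRingEnd ℂ F₁ / (z ^ 2 - 1) * z ^ (n : ℕ) *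
              Complex.exp (-μ * ((n : ℝ) ^ (1 - 2 * γ) / (1 - 2 * γ) : ℝ))))
      atTop (nhds 0))
    (hW : ∀ n : ℕ, 1 ≤ n → (P n : ℂ) * Q (n + 1) - (P (n + 1) : ℂ) * Q n = 1) :
    F * starRingEnd ℂ F₁ - starRingEnd ℂ F * F₁ = 1 / z - z := by
  have hz0 : z ≠ 0 := fun h => by simp [h] at hz
  have hznorm : ‖z‖ = 1 := by exact hz
  have hz12 : (1 : ℂ) - z ^ 2 ≠ 0 := sub_ne_zero.mpr fun h => hz2 h.symm
  have hz21 : z ^ 2 - 1 ≠ 0 := sub_ne_zero.mpr hz2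
  set α : ℝ := 1 - 2 * γ with hαdef
  have hα0 : 0 < α := by rw [hαdef]; linarith
  have hα1 : α < 1 := by rw [hαdef]; linarith
  set A : ℂ := z * F / (1 - z ^ 2) with hA
  set B : ℂ := z * starRingEnd ℂ F / (z ^ 2 - 1) with hB
  set A₁ : ℂ := z * F₁ / (1 - z ^ 2) with hA₁
  set B₁ : ℂ := z * starRingEnd ℂ F₁ / (z ^ 2 - 1) with hB₁
  set S : ℕ → ℂ := jostS z A B μ α with hSdef
  set T : ℕ → ℂ := jostS z A₁ B₁ μ α with hTdef
  have hP' : Tendsto (fun n : ℕ => (P n : ℂ) - S n) atTop (nhds 0) := hP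
  have hQ' : Tendsto (fun n : ℕ => (Q n : ℂ) - T n) atTop (nhds 0) := hQ
  have hSb : ∀ n : ℕ, ‖S n‖ ≤ ‖A‖ + ‖B‖ := jostS_norm_le z A B μ α hznorm hμ
  have hTb : ∀ n : ℕ, ‖T n‖ ≤ ‖A₁‖ + ‖B₁‖ := jostS_norm_le z A₁ B₁ μ α hznorm hμ
  have hPs : Tendsto (fun n : ℕ => (P (n + 1) : ℂ) - S (n + 1)) atTop (nhds 0) :=
    hP'.comp (tendsto_add_atTop_nat 1)
  have hQs : Tendsto (fun n : ℕ => (Q (n + 1) : ℂ) - T (n + 1)) atTop (nhds 0) :=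
    hQ'.comp (tendsto_add_atTop_nat 1)
  have t1 := aux_mul_tendsto_zero hSb hQs
  have t2 := (aux_mul_tendsto_zero (fun n => hTb (n + 1)) hP').congr fun n => mul_comm _ _
  have t3 : Tendsto (fun n : ℕ => ((P n : ℂ) - S n) * ((Q (n + 1) : ℂ) - T (n + 1)))
      atTop (nhds 0) := by simpa using hP'.mul hQs
  have t4 := aux_mul_tendsto_zero (fun n => hSb (n + 1)) hQ'
  have t5 := (aux_mul_tendsto_zero hTb hPs).congr fun n => mul_comm _ _
  have t6 : Tendsto (fun n : ℕ => ((P (n + 1) : ℂ) - S (n + 1)) * ((Q n : ℂ) - T n))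
      atTop (nhds 0) := by simpa using hPs.mul hQ'
  have hD := ((((t1.add t2).add t3).sub t4).sub t5).sub t6
  have hdiff : Tendsto (fun n : ℕ =>
      ((P n : ℂ) * Q (n + 1) - (P (n + 1) : ℂ) * Q n) - (S n * T (n + 1) - S (n + 1) * T n))
      atTop (nhds 0) := by
    refine Tendsto.congr (fun n => ?_) (by simpa using hD)
    ring
  have hWlim : Tendsto (fun n : ℕ => S n * T (n + 1) - S (n + 1) * T n) atTop
      (nhds ((A * B₁ - B * A₁) * (z - z⁻¹))) := by
    have hρ := jostRho_tendsto μ hα0 hα1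
    have h := (((hρ.inv₀ one_ne_zero).const_mul z).sub (hρ.const_mul z⁻¹)).const_mul
      (A * B₁ - B * A₁)
    refine Tendsto.congr (fun n => (jostS_wronskian z A B A₁ B₁ μ α hz0 n).symm) ?_
    simpa using h
  have hPQ : Tendsto (fun n : ℕ => (P n : ℂ) * Q (n + 1) - (P (n + 1) : ℂ) * Q n) atTop
      (nhds ((A * B₁ - B * A₁) * (z - z⁻¹))) := by
    have h := hdiff.add hWlim
    rw [zero_add] at h
    exact h.congr fun n => by ring
  have h1 : Tendsto (fun n : ℕ => (P n : ℂ) * Q (n + 1) - (P (n + 1) : ℂ) * Q n) atTop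
      (nhds 1) := by
    refine Tendsto.congr' ?_ tendsto_const_nhds
    filter_upwards [eventually_ge_atTop 1] with n hn
    exact (hW n hn).symm
  have hkey : (A * B₁ - B * A₁) * (z - z⁻¹) = 1 := tendsto_nhds_unique hPQ h1
  rw [hA, hB, hA₁, hB₁] at hkey
  have hgoal : z * (F * starRingEnd ℂ F₁ - starRingEnd ℂ F * F₁) = 1 - z ^ 2 := by
    field_simp at hkey
    refine mul_left_cancel₀ (show ((1 - z ^ 2) ^ 3 * z) ≠ 0 from
      mul_ne_zero (pow_ne_zero _ hz12) hz0) ?_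
    linear_combination ((1 - z ^ 2) ^ 3 * z) * hkey
  field_simp
  linear_combination hgoal
end
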